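/- arXiv:1706.04998 — 2 statements merged into one kernel-verified Lean document; each statement's English description precedes it below -/
import Mathlib

section
/- For all n ≥ 1, every w ∈ W_n and every i ∈ {0,1,2} with w ≠ iⁿ, the effective resistance satisfies R_n(w, iⁿ) ≤ (5/2)·(5/3)ⁿ. -/
open MeasureTheory Filter Set
open scoped ENNReal NNReal Classical

noncomputable section

namespace SG

/-- The three vertices `p₀ = (0,0)`, `p₁ = (1,0)`, `p₂ = (1/2, √3/2)` viewed in `ℂ`. -/
def p : Fin 3 → ℂ := ![0, 1, 1/2 + (Real.sqrt 3 / 2) * Complex.I]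

/-- The three contraction maps `fᵢ x = (x + pᵢ)/2`. -/
def f (i : Fin 3) (x : ℂ) : ℂ := (x + p i) / 2

/-- `K` is the Sierpinski gasket: the (unique) nonempty compact set with
`K = f₀(K) ∪ f₁(K) ∪ f₂(K)`. -/
def IsSG (K : Set ℂ) : Prop :=
  K.Nonempty ∧ IsCompact K ∧ K = f 0 '' K ∪ f 1 '' K ∪ f 2 '' K

/-- `α = log 3 / log 2`. -/
def alpha : ℝ := Real.log 3 / Real.log 2

/-- `β* = log 5 / log 2`. -/
def betastar : ℝ := Real.log 5 / Real.log 2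

/-- The normalized `α`-dimensional Hausdorff measure restricted to `K`. -/
def nu (K : Set ℂ) : Measure ℂ :=
  ((Measure.hausdorffMeasure alpha : Measure ℂ) K)⁻¹ •
    (Measure.hausdorffMeasure alpha : Measure ℂ).restrict K

/-- `f_w` for a finite word `w` over `{0,1,2}` (empty word gives the identity). -/
def fwl : List (Fin 3) → ℂ → ℂ
  | [] => id
  | i :: t => f i ∘ fwl t

/-- `f_w` for a word `w ∈ W_n = {0,1,2}ⁿ`. -/
def fw {n : ℕ} (w : Fin n → Fin 3) : ℂ → ℂ := fwl (List.ofFn w)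

/-- The cell `K_w = f_w(K)`. -/
def Kw (K : Set ℂ) {n : ℕ} (w : Fin n → Fin 3) : Set ℂ := fw w '' K

/-- Adjacency `w⁽¹⁾ ∼ₙ w⁽²⁾`: distinct words with intersecting cells. -/
def Adj (K : Set ℂ) {n : ℕ} (w1 w2 : Fin n → Fin 3) : Prop :=
  w1 ≠ w2 ∧ (Kw K w1 ∩ Kw K w2).Nonempty

/-- `Pₙu(w) = ∫_K u(f_w(x)) ν(dx)`. -/
def P (K : Set ℂ) {n : ℕ} (u : ℂ → ℝ) (w : Fin n → Fin 3) : ℝ :=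
  ∫ x, u (fw w x) ∂(nu K)

/-- `Aₙ(u)`: sum over unordered adjacent pairs in `W_n` of `(Pₙu(w⁽¹⁾) − Pₙu(w⁽²⁾))²`
(written as half the sum over ordered pairs). -/
def A (K : Set ℂ) (n : ℕ) (u : ℂ → ℝ) : ℝ :=
  (1/2) * ∑ w1 : Fin n → Fin 3, ∑ w2 : Fin n → Fin 3,
    if Adj K w1 w2 then (P K u w1 - P K u w2)^2 else 0

/-- The graph energy `Eₙ(u,u)` on `W_n` (half the sum over ordered adjacent pairs). -/
def En (K : Set ℂ) {n : ℕ} (u : (Fin n → Fin 3) → ℝ) : ℝ :=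
  (1/2) * ∑ w1 : Fin n → Fin 3, ∑ w2 : Fin n → Fin 3,
    if Adj K w1 w2 then (u w1 - u w2)^2 else 0

/-- The effective resistance `Rₙ(a,b)` between two words of `W_n`. -/
def Rn (K : Set ℂ) {n : ℕ} (a b : Fin n → Fin 3) : ℝ :=
  (sInf {e : ℝ | ∃ u : (Fin n → Fin 3) → ℝ, u a = 1 ∧ u b = 0 ∧ e = En K u})⁻¹

abbrev Wd (n : ℕ) := Fin n → Fin 3

variable {K : Set ℂ}

lemma f_fix (i : Fin 3) : f i (p i) = p i := by
  simp only [f]; ring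

lemma cross_pt (i j : Fin 3) : f i (p j) = f j (p i) := by
  simp only [f]; ring

lemma mem_K_p (hK : IsSG K) (i : Fin 3) : p i ∈ K := by
  obtain ⟨x, hx⟩ := hK.1
  have hsub : f i '' K ⊆ K := by
    conv_rhs => rw [hK.2.2]
    fin_cases i
    · exact subset_union_left.trans subset_union_left
    · exact subset_union_right.trans subset_union_left
    · exact subset_union_right
  have hmem : ∀ k : ℕ, (f i)^[k] x ∈ K := by
    intro k
    induction k with
    | zero => exact hx
    | succ k ih =>
      rw [Function.iterate_succ_apply']
      exact hsub ⟨_, ih, rfl⟩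
  have hform : ∀ k : ℕ, (f i)^[k] x = p i + (x - p i) * ((1:ℂ)/2)^k := by
    intro k
    induction k with
    | zero => simp
    | succ k ih =>
      rw [Function.iterate_succ_apply', ih, f, pow_succ]
      ring
  have hlt : ‖((1:ℂ)/2)‖ < 1 := by
    have h12 : ((1:ℂ)/2) = (((1:ℝ)/2 : ℝ) : ℂ) := by norm_num
    rw [h12, Complex.norm_real, Real.norm_eq_abs]
    rw [abs_of_nonneg (by norm_num)]
    norm_num
  have htend : Tendsto (fun k : ℕ => (f i)^[k] x) atTop (nhds (p i)) := by
    simp only [hform]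
    have h2 : Tendsto (fun k : ℕ => ((1:ℂ)/2)^k) atTop (nhds 0) :=
      tendsto_pow_atTop_nhds_zero_of_norm_lt_one hlt
    have h3 := (h2.const_mul (x - p i)).const_add (p i)
    simpa using h3
  exact hK.2.1.isClosed.mem_of_tendsto htend (Filter.Eventually.of_forall hmem)

lemma fw_cons {n : ℕ} (i : Fin 3) (a : Wd n) : fw (Fin.cons i a) = f i ∘ fw a := by
  unfold fw
  rw [List.ofFn_succ]
  simp only [Fin.cons_zero, Fin.cons_succ]
  rfl

lemma Kw_cons {n : ℕ} (i : Fin 3) (a : Wd n) : Kw K (Fin.cons i a) = f i '' Kw K a := by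
  unfold Kw
  rw [fw_cons, Set.image_comp]

lemma fw_one (x : Wd 1) : fw x = f (x 0) := by
  unfold fw
  rw [List.ofFn_succ]
  simp only [List.ofFn_zero]
  show f (x 0) ∘ fwl [] = f (x 0)
  rfl

lemma Kw_one (x : Wd 1) : Kw K x = f (x 0) '' K := by
  unfold Kw; rw [fw_one]

lemma const_cons {n : ℕ} (i : Fin 3) :
    (fun _ : Fin (n+1) => i) = Fin.cons i (fun _ : Fin n => i) := by
  funext k
  induction k using Fin.cases <;> simp

lemma fw_const_fix {n : ℕ} (i : Fin 3) : fw (fun _ : Fin n => i) (p i) = p i := by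
  induction n with
  | zero =>
    show fwl (List.ofFn _) _ = _
    simp [List.ofFn_zero, fwl]
  | succ n ih =>
    rw [const_cons, fw_cons]
    simp only [Function.comp_apply, ih, f_fix]

lemma p_mem_Kw_const (hK : IsSG K) (i : Fin 3) {n : ℕ} :
    p i ∈ Kw K (fun _ : Fin n => i) :=
  ⟨p i, mem_K_p hK i, fw_const_fix i⟩

lemma cons_ne {n : ℕ} {i j : Fin 3} (h : i ≠ j) (a b : Wd n) :
    (Fin.cons i a : Wd (n+1)) ≠ Fin.cons j b := by
  intro he
  exact h (by simpa using congrFun he 0)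

lemma adj_symm {n : ℕ} {x y : Wd n} (h : Adj K x y) : Adj K y x :=
  ⟨h.1.symm, by rw [Set.inter_comm]; exact h.2⟩

lemma adj_one (hK : IsSG K) {x y : Wd 1} (h : x ≠ y) : Adj K x y := by
  refine ⟨h, ⟨f (x 0) (p (y 0)), ?_, ?_⟩⟩
  · rw [Kw_one]; exact ⟨p (y 0), mem_K_p hK _, rfl⟩
  · rw [Kw_one, cross_pt]; exact ⟨p (x 0), mem_K_p hK _, rfl⟩

lemma adj_cons {n : ℕ} {a b : Wd n} (h : Adj K a b) (i : Fin 3) :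
    Adj K (Fin.cons i a) (Fin.cons i b) := by
  constructor
  · intro he
    apply h.1
    funext k
    simpa using congrFun he k.succ
  · obtain ⟨z, hz1, hz2⟩ := h.2
    exact ⟨f i z, by rw [Kw_cons]; exact ⟨z, hz1, rfl⟩, by rw [Kw_cons]; exact ⟨z, hz2, rfl⟩⟩

lemma adj_cross (hK : IsSG K) {n : ℕ} {i j : Fin 3} (h : i ≠ j) :
    Adj K (Fin.cons i (fun _ : Fin n => j)) (Fin.cons j (fun _ : Fin n => i)) := by
  refine ⟨cons_ne h _ _, ⟨f i (p j), ?_, ?_⟩⟩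
  · rw [Kw_cons]; exact ⟨p j, p_mem_Kw_const hK j, rfl⟩
  · rw [Kw_cons, cross_pt]; exact ⟨p i, p_mem_Kw_const hK i, rfl⟩


/-! ### Flow infrastructure -/

def dv {n : ℕ} (θ : Wd n → Wd n → ℝ) (x : Wd n) : ℝ := ∑ y, θ x y

def Eng {n : ℕ} (θ : Wd n → Wd n → ℝ) : ℝ := (1/2) * ∑ x, ∑ y, (θ x y)^2

def Dir {n : ℕ} (a b x : Wd n) : ℝ :=
  (if x = a then (1:ℝ) else 0) - (if x = b then 1 else 0)

def IsFlow (K : Set ℂ) {n : ℕ} (θ : Wd n → Wd n → ℝ) : Prop :=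
  (∀ x y, θ x y = - θ y x) ∧ ∀ x y, θ x y ≠ 0 → Adj K x y

def edF {n : ℕ} (a b : Wd n) : Wd n → Wd n → ℝ :=
  fun x y => (if x = a ∧ y = b then (1:ℝ) else 0) - (if x = b ∧ y = a then 1 else 0)

def emb {n : ℕ} (i : Fin 3) (θ : Wd n → Wd n → ℝ) : Wd (n+1) → Wd (n+1) → ℝ :=
  fun x y => if x 0 = i ∧ y 0 = i then θ (Fin.tail x) (Fin.tail y) else 0

lemma sum_cons_fn {n : ℕ} (g : Wd (n+1) → ℝ) :
    ∑ x, g x = ∑ c : Fin 3, ∑ t : Wd n, g (Fin.cons c t) := by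
  rw [← Equiv.sum_comp (Fin.consEquiv (fun _ : Fin (n+1) => Fin 3)) g, Fintype.sum_prod_type]
  rfl

lemma sum_one (g : Wd 1 → ℝ) : ∑ x, g x = ∑ c : Fin 3, g (fun _ => c) := by
  rw [sum_cons_fn]
  apply Finset.sum_congr rfl
  intro c _
  rw [Fintype.sum_unique]
  congr 1
  funext k
  exact Fin.cases rfl (fun j => j.elim0) k

lemma dv_add {n : ℕ} (θ φ : Wd n → Wd n → ℝ) (x : Wd n) :
    dv (θ + φ) x = dv θ x + dv φ x := by
  simp [dv, Finset.sum_add_distrib]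

lemma dv_smul {n : ℕ} (c : ℝ) (θ : Wd n → Wd n → ℝ) (x : Wd n) :
    dv (c • θ) x = c * dv θ x := by
  simp [dv, Finset.mul_sum]

lemma dv_edF {n : ℕ} (a b x : Wd n) : dv (edF a b) x = Dir a b x := by
  unfold dv edF Dir
  rw [Finset.sum_sub_distrib]
  congr 1
  · by_cases hx : x = a <;> simp [hx]
  · by_cases hx : x = b <;> simp [hx]

lemma dv_emb {n : ℕ} (i : Fin 3) (θ : Wd n → Wd n → ℝ) (x : Wd (n+1)) :
    dv (emb i θ) x = if x 0 = i then dv θ (Fin.tail x) else 0 := by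
  unfold dv emb
  rw [sum_cons_fn (g := fun y => if x 0 = i ∧ y 0 = i then θ (Fin.tail x) (Fin.tail y) else 0)]
  simp only [Fin.cons_zero, Fin.tail_cons]
  by_cases hx : x 0 = i
  · simp only [hx, true_and]
    rw [Finset.sum_eq_single i]
    · simp
    · intro c _ hc; simp [hc]
    · simp
  · simp [hx]

lemma Eng_nonneg {n : ℕ} (θ : Wd n → Wd n → ℝ) : 0 ≤ Eng θ := by
  unfold Eng
  positivity

lemma Eng_smul {n : ℕ} (c : ℝ) (θ : Wd n → Wd n → ℝ) : Eng (c • θ) = c^2 * Eng θ := by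
  unfold Eng
  simp only [Pi.smul_apply, smul_eq_mul, mul_pow]
  simp only [← Finset.mul_sum]
  ring

lemma Eng_edF {n : ℕ} (a b : Wd n) : Eng (edF a b) ≤ 1 := by
  unfold Eng edF
  have h1 : ∀ x y : Wd n,
      ((if x = a ∧ y = b then (1:ℝ) else 0) - (if x = b ∧ y = a then 1 else 0))^2
      ≤ (if x = a then (1:ℝ) else 0) * (if y = b then 1 else 0)
        + (if x = b then (1:ℝ) else 0) * (if y = a then 1 else 0) := by
    intro x y
    split_ifs <;> first | (exfalso; tauto) | norm_num
  have h2 : ∑ x : Wd n, ∑ y : Wd n,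
      ((if x = a ∧ y = b then (1:ℝ) else 0) - (if x = b ∧ y = a then 1 else 0))^2 ≤ 2 := by
    calc ∑ x : Wd n, ∑ y : Wd n,
        ((if x = a ∧ y = b then (1:ℝ) else 0) - (if x = b ∧ y = a then 1 else 0))^2
        ≤ ∑ x : Wd n, ∑ y : Wd n,
          ((if x = a then (1:ℝ) else 0) * (if y = b then 1 else 0)
            + (if x = b then (1:ℝ) else 0) * (if y = a then 1 else 0)) :=
          Finset.sum_le_sum (fun x _ => Finset.sum_le_sum fun y _ => h1 x y)
      _ = (∑ x : Wd n, if x = a then (1:ℝ) else 0) * (∑ y : Wd n, if y = b then (1:ℝ) else 0)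
          + (∑ x : Wd n, if x = b then (1:ℝ) else 0) * (∑ y : Wd n, if y = a then (1:ℝ) else 0) := by
          rw [Finset.sum_mul_sum, Finset.sum_mul_sum, ← Finset.sum_add_distrib]
          apply Finset.sum_congr rfl
          intro x _
          rw [← Finset.sum_add_distrib]
      _ = 2 := by
          simp only [Finset.sum_ite_eq', Finset.mem_univ, if_true]
          norm_num
  linarith

lemma Eng_emb {n : ℕ} (i : Fin 3) (θ : Wd n → Wd n → ℝ) : Eng (emb i θ) = Eng θ := by
  unfold Eng
  congr 1
  rw [sum_cons_fn (g := fun x => ∑ y, (emb i θ x y)^2)]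
  have h1 : ∀ (c : Fin 3) (t : Wd n), (∑ y, (emb i θ (Fin.cons c t) y)^2)
      = if c = i then ∑ t' : Wd n, (θ t t')^2 else 0 := by
    intro c t
    rw [sum_cons_fn (g := fun y => (emb i θ (Fin.cons c t) y)^2)]
    unfold emb
    simp only [Fin.cons_zero, Fin.tail_cons]
    by_cases hc : c = i
    · simp only [hc, true_and]
      rw [Finset.sum_eq_single i]
      · simp
      · intro c' _ hc'; simp [hc']
      · simp
    · simp [hc]
  calc ∑ c : Fin 3, ∑ t : Wd n, ∑ y, (emb i θ (Fin.cons c t) y)^2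
      = ∑ c : Fin 3, ∑ t : Wd n, (if c = i then ∑ t' : Wd n, (θ t t')^2 else 0) :=
        Finset.sum_congr rfl fun c _ => Finset.sum_congr rfl fun t _ => h1 c t
    _ = ∑ t : Wd n, ∑ t' : Wd n, (θ t t')^2 := by
        rw [Finset.sum_comm]
        apply Finset.sum_congr rfl
        intro t _
        rw [Finset.sum_ite_eq']
        simp

def Dsj {n : ℕ} (θ φ : Wd n → Wd n → ℝ) : Prop := ∀ x y, θ x y = 0 ∨ φ x y = 0

lemma Dsj.symm {n : ℕ} {θ φ : Wd n → Wd n → ℝ} (h : Dsj θ φ) : Dsj φ θ :=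
  fun x y => (h x y).symm

lemma Dsj.add_left {n : ℕ} {θ₁ θ₂ φ : Wd n → Wd n → ℝ} (h1 : Dsj θ₁ φ) (h2 : Dsj θ₂ φ) :
    Dsj (θ₁ + θ₂) φ := by
  intro x y
  rcases h1 x y with h | h
  · rcases h2 x y with h' | h'
    · left; simp [h, h']
    · right; exact h'
  · right; exact h

lemma Dsj.smul_left {n : ℕ} {θ φ : Wd n → Wd n → ℝ} (c : ℝ) (h : Dsj θ φ) :
    Dsj (c • θ) φ := by
  intro x y
  rcases h x y with h | h
  · left; simp [h]
  · right; exact h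

lemma Dsj.smul_right {n : ℕ} {θ φ : Wd n → Wd n → ℝ} (c : ℝ) (h : Dsj θ φ) :
    Dsj θ (c • φ) := by
  intro x y
  rcases h x y with h | h
  · left; exact h
  · right; simp [h]

lemma emb_supp {n : ℕ} {i : Fin 3} {θ : Wd n → Wd n → ℝ} {x y : Wd (n+1)}
    (h : emb i θ x y ≠ 0) : x 0 = i ∧ y 0 = i := by
  unfold emb at h
  by_cases hc : x 0 = i ∧ y 0 = i
  · exact hc
  · simp [hc] at h

lemma edF_supp {n : ℕ} {a b x y : Wd n} (h : edF a b x y ≠ 0) :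
    (x = a ∧ y = b) ∨ (x = b ∧ y = a) := by
  unfold edF at h
  by_cases h1 : x = a ∧ y = b
  · exact Or.inl h1
  · by_cases h2 : x = b ∧ y = a
    · exact Or.inr h2
    · simp [h1, h2] at h

lemma dsj_emb_emb {n : ℕ} {i j : Fin 3} (h : i ≠ j) (θ φ : Wd n → Wd n → ℝ) :
    Dsj (emb i θ) (emb j φ) := by
  intro x y
  by_cases h1 : emb i θ x y = 0
  · exact Or.inl h1
  · right
    have hx := (emb_supp h1).1
    unfold emb
    rw [if_neg]
    intro hc
    exact h (hx ▸ hc.1 ▸ rfl)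

lemma dsj_emb_edF {n : ℕ} {i : Fin 3} {a b : Wd (n+1)} (θ : Wd n → Wd n → ℝ)
    (h : a 0 ≠ b 0) : Dsj (emb i θ) (edF a b) := by
  intro x y
  by_cases h1 : emb i θ x y = 0
  · exact Or.inl h1
  · right
    obtain ⟨hx, hy⟩ := emb_supp h1
    by_contra h2
    rcases edF_supp h2 with ⟨rfl, rfl⟩ | ⟨rfl, rfl⟩
    · exact h (hx.trans hy.symm)
    · exact h (hy.trans hx.symm)

lemma dsj_edF_edF {n : ℕ} {a b a' b' : Wd (n+1)}
    (h1 : ¬(a 0 = a' 0 ∧ b 0 = b' 0)) (h2 : ¬(a 0 = b' 0 ∧ b 0 = a' 0)) :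
    Dsj (edF a b) (edF a' b') := by
  intro x y
  by_cases hl : edF a b x y = 0
  · exact Or.inl hl
  · right
    by_contra hr
    rcases edF_supp hl with ⟨rfl, rfl⟩ | ⟨rfl, rfl⟩ <;>
      rcases edF_supp hr with ⟨he1, he2⟩ | ⟨he1, he2⟩
    · exact h1 ⟨congrFun he1 0, congrFun he2 0⟩
    · exact h2 ⟨congrFun he1 0, congrFun he2 0⟩
    · exact h2 ⟨congrFun he2 0, congrFun he1 0⟩
    · exact h1 ⟨congrFun he2 0, congrFun he1 0⟩

lemma Eng_add_le {n : ℕ} {θ φ : Wd n → Wd n → ℝ} (h : Dsj θ φ) :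
    Eng (θ + φ) ≤ Eng θ + Eng φ := by
  unfold Eng
  have hpt : ∀ x y, ((θ + φ) x y)^2 ≤ (θ x y)^2 + (φ x y)^2 := by
    intro x y
    rcases h x y with h' | h' <;> simp [h']
  have hs : ∑ x : Wd n, ∑ y : Wd n, ((θ + φ) x y)^2
      ≤ ∑ x : Wd n, ∑ y : Wd n, ((θ x y)^2 + (φ x y)^2) :=
    Finset.sum_le_sum (fun x _ => Finset.sum_le_sum fun y _ => hpt x y)
  have he : ∑ x : Wd n, ∑ y : Wd n, ((θ x y)^2 + (φ x y)^2)
      = (∑ x : Wd n, ∑ y : Wd n, (θ x y)^2) + ∑ x : Wd n, ∑ y : Wd n, (φ x y)^2 := by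
    rw [← Finset.sum_add_distrib]
    exact Finset.sum_congr rfl fun x _ => Finset.sum_add_distrib
  rw [he] at hs
  linarith

lemma isFlow_edF {n : ℕ} {a b : Wd n} (hadj : a ≠ b → Adj K a b) : IsFlow K (edF a b) := by
  constructor
  · intro x y
    unfold edF
    have e1 : (y = a ∧ x = b) = (x = b ∧ y = a) := propext (by tauto)
    have e2 : (y = b ∧ x = a) = (x = a ∧ y = b) := propext (by tauto)
    simp only [e1, e2]
    ring
  · intro x y hne
    rcases edF_supp hne with ⟨rfl, rfl⟩ | ⟨rfl, rfl⟩
    · apply hadj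
      intro he
      rw [he] at hne
      simp [edF] at hne
    · apply adj_symm
      apply hadj
      intro he
      rw [he] at hne
      simp [edF] at hne

lemma isFlow_emb {n : ℕ} {i : Fin 3} {θ : Wd n → Wd n → ℝ} (hθ : IsFlow K θ) :
    IsFlow K (emb i θ) := by
  constructor
  · intro x y
    unfold emb
    by_cases h : x 0 = i ∧ y 0 = i
    · rw [if_pos h, if_pos ⟨h.2, h.1⟩, hθ.1]
    · rw [if_neg h, if_neg (fun hc => h ⟨hc.2, hc.1⟩)]
      ring
  · intro x y hne
    obtain ⟨hx, hy⟩ := emb_supp hne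
    have hθne : θ (Fin.tail x) (Fin.tail y) ≠ 0 := by
      unfold emb at hne
      rwa [if_pos ⟨hx, hy⟩] at hne
    have hadj := adj_cons (hθ.2 _ _ hθne) i
    have hxe : Fin.cons i (Fin.tail x) = x := by
      rw [← hx]; exact Fin.cons_self_tail x
    have hye : Fin.cons i (Fin.tail y) = y := by
      rw [← hy]; exact Fin.cons_self_tail y
    rwa [hxe, hye] at hadj

lemma isFlow_add {n : ℕ} {θ φ : Wd n → Wd n → ℝ} (hθ : IsFlow K θ) (hφ : IsFlow K φ) :
    IsFlow K (θ + φ) := by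
  constructor
  · intro x y
    simp only [Pi.add_apply]
    rw [hθ.1 x y, hφ.1 x y]
    ring
  · intro x y h
    by_cases h1 : θ x y = 0
    · exact hφ.2 x y (by simpa [h1] using h)
    · exact hθ.2 x y h1

lemma isFlow_smul {n : ℕ} {θ : Wd n → Wd n → ℝ} (c : ℝ) (hθ : IsFlow K θ) :
    IsFlow K (c • θ) := by
  constructor
  · intro x y
    simp only [Pi.smul_apply, smul_eq_mul]
    rw [hθ.1 x y]
    ring
  · intro x y h
    apply hθ.2 x y
    intro h0
    simp [h0] at h


/-! ### The three-terminal flow -/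

def Aco (i : Fin 3) (a : Fin 3 → ℝ) : Fin 3 → ℝ :=
  fun m => if m = i then a i else -(a i - a m)/3

def Qd (a : Fin 3 → ℝ) : ℝ := a 0^2 + a 1^2 + a 2^2

def CD {n : ℕ} (a : Fin 3 → ℝ) (x : Wd n) : ℝ :=
  ∑ m : Fin 3, a m * (if x = fun _ => m then 1 else 0)

def Tn : (n : ℕ) → (Fin 3 → ℝ) → Wd (n+1) → Wd (n+1) → ℝ
  | 0, a => fun x y => (a (x 0) - a (y 0))/3
  | n+1, a =>
      emb 0 (Tn n (Aco 0 a)) + emb 1 (Tn n (Aco 1 a)) + emb 2 (Tn n (Aco 2 a))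
      + ((a 0 - a 1)/3) • edF (Fin.cons 0 (fun _ => 1)) (Fin.cons 1 (fun _ => 0))
      + ((a 0 - a 2)/3) • edF (Fin.cons 0 (fun _ => 2)) (Fin.cons 2 (fun _ => 0))
      + ((a 1 - a 2)/3) • edF (Fin.cons 1 (fun _ => 2)) (Fin.cons 2 (fun _ => 1))

lemma const_eq_const {n : ℕ} {c m : Fin 3} :
    ((fun _ : Fin (n+1) => c) = fun _ => m) ↔ c = m :=
  ⟨fun h => congrFun h 0, fun h => by rw [h]⟩

lemma cons_eq_const {n : ℕ} {c m : Fin 3} {t : Wd n} :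
    (Fin.cons c t = fun _ : Fin (n+1) => m) ↔ (c = m ∧ t = fun _ => m) := by
  rw [const_cons m, Fin.cons_inj]

lemma aco_sum {a : Fin 3 → ℝ} (h : a 0 + a 1 + a 2 = 0) (i : Fin 3) :
    Aco i a 0 + Aco i a 1 + Aco i a 2 = 0 := by
  fin_cases i <;> simp [Aco] <;> linarith

lemma isFlow_Tn (hK : IsSG K) : ∀ (n : ℕ) (a : Fin 3 → ℝ), IsFlow K (Tn n a) := by
  intro n
  induction n with
  | zero =>
    intro a
    constructor
    · intro x y; simp only [Tn]; ring
    · intro x y h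
      apply adj_one hK
      intro he; rw [he] at h; simp [Tn] at h
  | succ n ih =>
    intro a
    simp only [Tn]
    refine isFlow_add (isFlow_add (isFlow_add (isFlow_add (isFlow_add ?_ ?_) ?_) ?_) ?_) ?_
    exacts [isFlow_emb (ih _), isFlow_emb (ih _), isFlow_emb (ih _),
      isFlow_smul _ (isFlow_edF (fun _ => adj_cross hK (by decide))),
      isFlow_smul _ (isFlow_edF (fun _ => adj_cross hK (by decide))),
      isFlow_smul _ (isFlow_edF (fun _ => adj_cross hK (by decide)))]

lemma dv_Tn : ∀ (n : ℕ) (a : Fin 3 → ℝ), a 0 + a 1 + a 2 = 0 →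
    ∀ x, dv (Tn n a) x = CD a x := by
  intro n
  induction n with
  | zero =>
    intro a h x
    unfold dv
    simp only [Tn]
    rw [sum_one (g := fun y => (a (x 0) - a (y 0))/3)]
    obtain ⟨c, rfl⟩ : ∃ c, x = fun _ : Fin 1 => c :=
      ⟨x 0, funext fun k => by rw [Fin.eq_zero k]⟩
    unfold CD
    simp only [const_eq_const, mul_ite, mul_one, mul_zero, Finset.sum_ite_eq,
      Finset.mem_univ, if_true]
    simp only [Fin.sum_univ_three]
    linarith
  | succ n ih =>
    intro a h x
    simp only [Tn]
    simp only [dv_add, dv_emb, dv_smul, dv_edF]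
    rw [ih _ (aco_sum h 0), ih _ (aco_sum h 1), ih _ (aco_sum h 2)]
    obtain ⟨c, t, rfl⟩ : ∃ c t, x = Fin.cons c t :=
      ⟨x 0, Fin.tail x, (Fin.cons_self_tail x).symm⟩
    simp only [Fin.cons_zero, Fin.tail_cons]
    unfold CD Dir
    simp only [Fin.sum_univ_three, cons_eq_const, Fin.cons_inj]
    fin_cases c <;>
      by_cases h0 : t = (fun _ : Fin (n+1) => (0:Fin 3)) <;>
      by_cases h1 : t = (fun _ : Fin (n+1) => (1:Fin 3)) <;>
      by_cases h2 : t = (fun _ : Fin (n+1) => (2:Fin 3)) <;>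
      simp_all [Aco, const_eq_const] <;> ring

lemma Eng_Tn : ∀ (n : ℕ) (a : Fin 3 → ℝ), a 0 + a 1 + a 2 = 0 →
    Eng (Tn n a) ≤ (((5:ℝ)/3)^(n+1) - 1)/2 * Qd a := by
  intro n
  induction n with
  | zero =>
    intro a h
    have e1 : Eng (Tn 0 a) = (1/2) * ∑ c : Fin 3, ∑ c' : Fin 3, ((a c - a c')/3)^2 := by
      unfold Eng
      simp only [Tn]
      rw [sum_one (g := fun x => ∑ y : Wd 1, ((a (x 0) - a (y 0))/3)^2)]
      have h2 : ∀ c : Fin 3, (∑ y : Wd 1, ((a ((fun _ : Fin 1 => c) 0) - a (y 0))/3)^2)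
          = ∑ c' : Fin 3, ((a c - a c')/3)^2 := by
        intro c
        rw [sum_one (g := fun y : Wd 1 => ((a ((fun _ : Fin 1 => c) 0) - a (y 0))/3)^2)]
      rw [Finset.sum_congr rfl fun c _ => h2 c]
    rw [e1]
    simp only [Fin.sum_univ_three]
    have key : (1/2) * ((((a 0 - a 0)/3)^2 + ((a 0 - a 1)/3)^2 + ((a 0 - a 2)/3)^2)
        + (((a 1 - a 0)/3)^2 + ((a 1 - a 1)/3)^2 + ((a 1 - a 2)/3)^2)
        + (((a 2 - a 0)/3)^2 + ((a 2 - a 1)/3)^2 + ((a 2 - a 2)/3)^2))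
        = 1/3 * Qd a - (a 0 + a 1 + a 2)^2/9 := by
      unfold Qd; ring
    rw [key, h]
    have hp : ((5:ℝ)/3)^(0+1) = 5/3 := pow_one _
    rw [hp]
    norm_num
  | succ n ih =>
    intro a h
    set C : ℝ := (((5:ℝ)/3)^(n+1) - 1)/2 with hC
    have hC0 : 0 ≤ C := by
      rw [hC]
      have : (1:ℝ) ≤ (5/3)^(n+1) := one_le_pow₀ (by norm_num)
      linarith
    have hb01 : ((Fin.cons 0 (fun _ : Fin (n+1) => 1) : Wd (n+2)) 0 : Fin 3)
        ≠ (Fin.cons 1 (fun _ : Fin (n+1) => 0) : Wd (n+2)) 0 := by simp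
    have hb02 : ((Fin.cons 0 (fun _ : Fin (n+1) => 2) : Wd (n+2)) 0 : Fin 3)
        ≠ (Fin.cons 2 (fun _ : Fin (n+1) => 0) : Wd (n+2)) 0 := by simp
    have hb12 : ((Fin.cons 1 (fun _ : Fin (n+1) => 2) : Wd (n+2)) 0 : Fin 3)
        ≠ (Fin.cons 2 (fun _ : Fin (n+1) => 1) : Wd (n+2)) 0 := by simp
    -- disjointness facts
    have d1 : Dsj (emb 0 (Tn n (Aco 0 a))) (emb 1 (Tn n (Aco 1 a))) :=
      dsj_emb_emb (by decide) _ _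
    have d2 : Dsj (emb 0 (Tn n (Aco 0 a)) + emb 1 (Tn n (Aco 1 a))) (emb 2 (Tn n (Aco 2 a))) :=
      Dsj.add_left (dsj_emb_emb (by decide) _ _) (dsj_emb_emb (by decide) _ _)
    have d3 : Dsj (emb 0 (Tn n (Aco 0 a)) + emb 1 (Tn n (Aco 1 a)) + emb 2 (Tn n (Aco 2 a)))
        (((a 0 - a 1)/3) • edF (Fin.cons 0 (fun _ => 1)) (Fin.cons 1 (fun _ => 0))) :=
      Dsj.add_left (Dsj.add_left (Dsj.smul_right _ (dsj_emb_edF _ hb01))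
          (Dsj.smul_right _ (dsj_emb_edF _ hb01)))
        (Dsj.smul_right _ (dsj_emb_edF _ hb01))
    have e0101 : Dsj (edF (Fin.cons 0 (fun _ : Fin (n+1) => 1)) (Fin.cons 1 (fun _ => 0)))
        (edF (Fin.cons 0 (fun _ : Fin (n+1) => 2)) (Fin.cons 2 (fun _ => 0))) :=
      dsj_edF_edF (by simp) (by simp)
    have e0112 : Dsj (edF (Fin.cons 0 (fun _ : Fin (n+1) => 1)) (Fin.cons 1 (fun _ => 0)))
        (edF (Fin.cons 1 (fun _ : Fin (n+1) => 2)) (Fin.cons 2 (fun _ => 1))) :=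
      dsj_edF_edF (by simp) (by simp)
    have e0212 : Dsj (edF (Fin.cons 0 (fun _ : Fin (n+1) => 2)) (Fin.cons 2 (fun _ => 0)))
        (edF (Fin.cons 1 (fun _ : Fin (n+1) => 2)) (Fin.cons 2 (fun _ => 1))) :=
      dsj_edF_edF (by simp) (by simp)
    have d4 : Dsj (emb 0 (Tn n (Aco 0 a)) + emb 1 (Tn n (Aco 1 a)) + emb 2 (Tn n (Aco 2 a))
        + ((a 0 - a 1)/3) • edF (Fin.cons 0 (fun _ => 1)) (Fin.cons 1 (fun _ => 0)))
        (((a 0 - a 2)/3) • edF (Fin.cons 0 (fun _ => 2)) (Fin.cons 2 (fun _ => 0))) :=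
      Dsj.add_left (Dsj.add_left (Dsj.add_left (Dsj.smul_right _ (dsj_emb_edF _ hb02))
          (Dsj.smul_right _ (dsj_emb_edF _ hb02)))
        (Dsj.smul_right _ (dsj_emb_edF _ hb02)))
        (Dsj.smul_right _ (Dsj.smul_left _ e0101))
    have d5 : Dsj (emb 0 (Tn n (Aco 0 a)) + emb 1 (Tn n (Aco 1 a)) + emb 2 (Tn n (Aco 2 a))
        + ((a 0 - a 1)/3) • edF (Fin.cons 0 (fun _ => 1)) (Fin.cons 1 (fun _ => 0))
        + ((a 0 - a 2)/3) • edF (Fin.cons 0 (fun _ => 2)) (Fin.cons 2 (fun _ => 0)))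
        (((a 1 - a 2)/3) • edF (Fin.cons 1 (fun _ => 2)) (Fin.cons 2 (fun _ => 1))) :=
      Dsj.add_left (Dsj.add_left (Dsj.add_left (Dsj.add_left
          (Dsj.smul_right _ (dsj_emb_edF _ hb12))
          (Dsj.smul_right _ (dsj_emb_edF _ hb12)))
        (Dsj.smul_right _ (dsj_emb_edF _ hb12)))
        (Dsj.smul_right _ (Dsj.smul_left _ e0112)))
        (Dsj.smul_right _ (Dsj.smul_left _ e0212))
    -- energy bounds for the pieces
    have bA0 : Eng (emb 0 (Tn n (Aco 0 a))) ≤ C * Qd (Aco 0 a) := by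
      rw [Eng_emb]; exact ih _ (aco_sum h 0)
    have bA1 : Eng (emb 1 (Tn n (Aco 1 a))) ≤ C * Qd (Aco 1 a) := by
      rw [Eng_emb]; exact ih _ (aco_sum h 1)
    have bA2 : Eng (emb 2 (Tn n (Aco 2 a))) ≤ C * Qd (Aco 2 a) := by
      rw [Eng_emb]; exact ih _ (aco_sum h 2)
    have bB01 : Eng (((a 0 - a 1)/3) • edF (Fin.cons 0 (fun _ : Fin (n+1) => 1))
        (Fin.cons 1 (fun _ => 0))) ≤ ((a 0 - a 1)/3)^2 := by
      rw [Eng_smul]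
      calc ((a 0 - a 1)/3)^2 * Eng (edF _ _) ≤ ((a 0 - a 1)/3)^2 * 1 :=
            mul_le_mul_of_nonneg_left (Eng_edF _ _) (sq_nonneg _)
        _ = ((a 0 - a 1)/3)^2 := mul_one _
    have bB02 : Eng (((a 0 - a 2)/3) • edF (Fin.cons 0 (fun _ : Fin (n+1) => 2))
        (Fin.cons 2 (fun _ => 0))) ≤ ((a 0 - a 2)/3)^2 := by
      rw [Eng_smul]
      calc ((a 0 - a 2)/3)^2 * Eng (edF _ _) ≤ ((a 0 - a 2)/3)^2 * 1 :=
            mul_le_mul_of_nonneg_left (Eng_edF _ _) (sq_nonneg _)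
        _ = ((a 0 - a 2)/3)^2 := mul_one _
    have bB12 : Eng (((a 1 - a 2)/3) • edF (Fin.cons 1 (fun _ : Fin (n+1) => 2))
        (Fin.cons 2 (fun _ => 1))) ≤ ((a 1 - a 2)/3)^2 := by
      rw [Eng_smul]
      calc ((a 1 - a 2)/3)^2 * Eng (edF _ _) ≤ ((a 1 - a 2)/3)^2 * 1 :=
            mul_le_mul_of_nonneg_left (Eng_edF _ _) (sq_nonneg _)
        _ = ((a 1 - a 2)/3)^2 := mul_one _
    have q0 : Qd (Aco 0 a) = (a 0)^2 + ((a 0 - a 1)/3)^2 + ((a 0 - a 2)/3)^2 := by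
      simp [Qd, Aco]; ring
    have q1 : Qd (Aco 1 a) = ((a 1 - a 0)/3)^2 + (a 1)^2 + ((a 1 - a 2)/3)^2 := by
      simp [Qd, Aco]; ring
    have q2 : Qd (Aco 2 a) = ((a 2 - a 0)/3)^2 + ((a 2 - a 1)/3)^2 + (a 2)^2 := by
      simp [Qd, Aco]; ring
    -- assemble
    simp only [Tn]
    have step1 := Eng_add_le d5
    have step2 := Eng_add_le d4
    have step3 := Eng_add_le d3
    have step4 := Eng_add_le d2
    have step5 := Eng_add_le d1
    have hgoal : (((5:ℝ)/3)^(n+1+1) - 1)/2 = (5*C + 1)/3 := by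
      rw [pow_succ, show ((5:ℝ)/3)^(n+1) = 2*C+1 from by rw [hC]; ring]
      ring
    rw [hgoal]
    have key : C * ((a 0)^2 + ((a 0 - a 1)/3)^2 + ((a 0 - a 2)/3)^2)
        + C * (((a 1 - a 0)/3)^2 + (a 1)^2 + ((a 1 - a 2)/3)^2)
        + C * (((a 2 - a 0)/3)^2 + ((a 2 - a 1)/3)^2 + (a 2)^2)
        + ((a 0 - a 1)/3)^2 + ((a 0 - a 2)/3)^2 + ((a 1 - a 2)/3)^2
        = (5*C + 1)/3 * Qd a - (2*C + 1)/9 * (a 0 + a 1 + a 2)^2 := by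
      unfold Qd; ring
    rw [h] at key
    norm_num at key
    rw [q0] at bA0
    rw [q1] at bA1
    rw [q2] at bA2
    linarith [step1, step2, step3, step4, step5, bA0, bA1, bA2, bB01, bB02, bB12,
      mul_nonneg hC0 (sq_nonneg ((a 0 - a 1)/3))]


def bb (j i : Fin 3) : Fin 3 → ℝ :=
  fun m => (if m = j then 1 else 0) - (if m = i then 1 else 0)

lemma bb_sum {j i : Fin 3} : bb j i 0 + bb j i 1 + bb j i 2 = 0 := by
  fin_cases j <;> fin_cases i <;> simp [bb]

lemma bb_Qd {j i : Fin 3} (h : j ≠ i) : Qd (bb j i) = 2 := by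
  fin_cases j <;> fin_cases i <;> simp_all [Qd, bb] <;> norm_num

lemma CD_bb {n : ℕ} (j i : Fin 3) (t : Wd (n+1)) :
    CD (bb j i) t = (if t = fun _ => j then 1 else 0) - (if t = fun _ => i then 1 else 0) := by
  fin_cases j <;> fin_cases i <;> simp [CD, bb, Fin.sum_univ_three] <;> split_ifs <;> norm_num

def Hn : (n : ℕ) → Wd (n+1) → Fin 3 → (Wd (n+1) → Wd (n+1) → ℝ)
  | 0, w, i => edF w (fun _ => i)
  | n+1, w, i =>
    if w 0 = i then emb i (Hn n (Fin.tail w) i)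
    else emb (w 0) (Hn n (Fin.tail w) i)
      + edF (Fin.cons (w 0) (fun _ => i)) (Fin.cons i (fun _ => w 0))
      + emb i (Tn n (bb (w 0) i))

lemma isFlow_Hn (hK : IsSG K) : ∀ (n : ℕ) (w : Wd (n+1)) (i : Fin 3),
    IsFlow K (Hn n w i) := by
  intro n
  induction n with
  | zero =>
    intro w i
    exact isFlow_edF (fun hne => adj_one hK hne)
  | succ n ih =>
    intro w i
    simp only [Hn]
    by_cases hw : w 0 = i
    · rw [if_pos hw]; exact isFlow_emb (ih _ _)
    · rw [if_neg hw]
      exact isFlow_add (isFlow_add (isFlow_emb (ih _ _))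
        (isFlow_edF (fun _ => adj_cross hK hw))) (isFlow_emb (isFlow_Tn hK _ _))

lemma dv_Hn : ∀ (n : ℕ) (w : Wd (n+1)) (i : Fin 3) (x : Wd (n+1)),
    dv (Hn n w i) x = Dir w (fun _ => i) x := by
  intro n
  induction n with
  | zero =>
    intro w i x
    simp only [Hn]
    exact dv_edF _ _ _
  | succ n ih =>
    intro w i x
    simp only [Hn]
    by_cases hw : w 0 = i
    · rw [if_pos hw, dv_emb, ih]
      obtain ⟨c, t, rfl⟩ : ∃ c t, x = Fin.cons c t :=
        ⟨x 0, Fin.tail x, (Fin.cons_self_tail x).symm⟩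
      have hwc : w = Fin.cons i (Fin.tail w) := by
        rw [← hw]; exact (Fin.cons_self_tail w).symm
      rw [hwc]
      simp only [Fin.cons_zero, Fin.tail_cons, Dir, const_cons, Fin.cons_inj, cons_eq_const]
      by_cases hc : c = i <;> simp [hc]
    · rw [if_neg hw]
      rw [dv_add, dv_add, dv_emb, dv_emb, dv_edF, ih, dv_Tn n _ bb_sum]
      obtain ⟨c, t, rfl⟩ : ∃ c t, x = Fin.cons c t :=
        ⟨x 0, Fin.tail x, (Fin.cons_self_tail x).symm⟩
      have hwc : w = Fin.cons (w 0) (Fin.tail w) := (Fin.cons_self_tail w).symm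
      rw [hwc]
      simp only [Fin.cons_zero, Fin.tail_cons, CD_bb, Dir, const_cons, Fin.cons_inj,
        cons_eq_const]
      have hw' : ¬ (i = w 0) := fun h => hw h.symm
      by_cases hcj : c = w 0 <;> by_cases hci : c = i
      · exact absurd (hcj.symm.trans hci) hw
      · simp [hcj, hci, hw, hw']
        try ring
      · simp [hcj, hci, hw, hw']
        try ring
      · simp [hcj, hci, hw, hw']
        try ring

lemma Eng_Hn : ∀ (n : ℕ) (w : Wd (n+1)) (i : Fin 3),
    Eng (Hn n w i) ≤ (3/2) * ((5:ℝ)/3)^(n+1) - 3/2 := by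
  intro n
  induction n with
  | zero =>
    intro w i
    simp only [Hn]
    have h1 := Eng_edF w ((fun _ => i) : Wd 1)
    have h2 : ((5:ℝ)/3)^(0+1) = 5/3 := pow_one _
    rw [h2]
    linarith
  | succ n ih =>
    intro w i
    simp only [Hn]
    by_cases hw : w 0 = i
    · rw [if_pos hw, Eng_emb]
      have h1 := ih (Fin.tail w) i
      have h2 : ((5:ℝ)/3)^(n+1) ≤ (5/3)^(n+1+1) :=
        pow_le_pow_right₀ (by norm_num) (Nat.le_succ (n+1))
      linarith
    · rw [if_neg hw]
      have hd1 : Dsj (emb (w 0) (Hn n (Fin.tail w) i))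
          (edF (Fin.cons (w 0) (fun _ => i)) (Fin.cons i (fun _ => w 0))) :=
        dsj_emb_edF _ (by simpa using hw)
      have hd2 : Dsj (emb (w 0) (Hn n (Fin.tail w) i)
          + edF (Fin.cons (w 0) (fun _ => i)) (Fin.cons i (fun _ => w 0)))
          (emb i (Tn n (bb (w 0) i))) :=
        Dsj.add_left (dsj_emb_emb hw _ _)
          ((dsj_emb_edF (i := i) _ (by simpa using hw)).symm)
      have h1 := Eng_add_le hd2
      have h2 := Eng_add_le hd1
      have h3 := ih (Fin.tail w) i
      have h4 := Eng_edF (Fin.cons (w 0) ((fun _ => i) : Wd (n+1))) (Fin.cons i (fun _ => w 0))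
      have hTq : Eng (Tn n (bb (w 0) i)) ≤ (((5:ℝ)/3)^(n+1) - 1)/2 * Qd (bb (w 0) i) :=
        Eng_Tn n _ bb_sum
      rw [bb_Qd hw] at hTq
      rw [Eng_emb] at h1 h2
      have hps : ((5:ℝ)/3)^(n+1+1) = (5/3)^(n+1) * (5/3) := pow_succ _ _
      rw [hps]
      linarith

lemma En_nonneg {n : ℕ} (u : Wd n → ℝ) : 0 ≤ En K u := by
  unfold En
  apply mul_nonneg (by norm_num)
  apply Finset.sum_nonneg
  intro x _
  apply Finset.sum_nonneg
  intro y _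
  split_ifs
  · exact sq_nonneg _
  · exact le_refl 0

lemma sum_Dir_mul {n : ℕ} (a b : Wd n) (u : Wd n → ℝ) :
    ∑ x, u x * Dir a b x = u a - u b := by
  unfold Dir
  simp only [mul_sub, mul_ite, mul_one, mul_zero]
  rw [Finset.sum_sub_distrib]
  simp [Finset.sum_ite_eq']

lemma flow_bound {n : ℕ} (θ : Wd n → Wd n → ℝ) (hf : IsFlow K θ) (a b : Wd n)
    (hdv : ∀ x, dv θ x = Dir a b x) (u : Wd n → ℝ) (hua : u a = 1) (hub : u b = 0) :
    4 ≤ (2 * Eng θ) * (2 * En K u) := by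
  have key : ∑ q : Wd n × Wd n, (θ q.1 q.2) * (if Adj K q.1 q.2 then u q.1 - u q.2 else 0)
      = 2 := by
    have e1 : ∀ q : Wd n × Wd n,
        θ q.1 q.2 * (if Adj K q.1 q.2 then u q.1 - u q.2 else 0)
          = θ q.1 q.2 * (u q.1 - u q.2) := by
      intro q
      by_cases hadj : Adj K q.1 q.2
      · rw [if_pos hadj]
      · rw [if_neg hadj]
        have h0 : θ q.1 q.2 = 0 := by
          by_contra hne
          exact hadj (hf.2 _ _ hne)
        rw [h0]; ring
    rw [Finset.sum_congr rfl fun q _ => e1 q, Fintype.sum_prod_type]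
    have e2 : ∀ x, (∑ y, θ x y * (u x - u y)) = u x * dv θ x - ∑ y, θ x y * u y := by
      intro x
      unfold dv
      rw [Finset.mul_sum, ← Finset.sum_sub_distrib]
      apply Finset.sum_congr rfl
      intro y _
      ring
    rw [Finset.sum_congr rfl fun x _ => e2 x, Finset.sum_sub_distrib]
    have e3 : ∑ x : Wd n, ∑ y : Wd n, θ x y * u y = - ∑ y : Wd n, u y * dv θ y := by
      rw [Finset.sum_comm]
      have e4 : ∀ y, (∑ x, θ x y * u y) = - (u y * dv θ y) := by
        intro y
        rw [← Finset.sum_mul]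
        have e5 : (∑ x, θ x y) = - dv θ y := by
          unfold dv
          calc (∑ x, θ x y) = ∑ x, -(θ y x) := Finset.sum_congr rfl fun x _ => by rw [hf.1 x y]
            _ = - ∑ x, θ y x := by rw [Finset.sum_neg_distrib]
        rw [e5]; ring
      rw [Finset.sum_congr rfl fun y _ => e4 y, Finset.sum_neg_distrib]
    rw [e3]
    simp only [sub_neg_eq_add, hdv]
    rw [sum_Dir_mul]
    linarith [hua, hub]
  have cs := Finset.sum_mul_sq_le_sq_mul_sq Finset.univ
      (fun q : Wd n × Wd n => θ q.1 q.2)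
      (fun q : Wd n × Wd n => if Adj K q.1 q.2 then u q.1 - u q.2 else 0)
  rw [key] at cs
  have eF : ∑ q : Wd n × Wd n, (θ q.1 q.2)^2 = 2 * Eng θ := by
    rw [Fintype.sum_prod_type]
    unfold Eng
    ring
  have eG : ∑ q : Wd n × Wd n, (if Adj K q.1 q.2 then u q.1 - u q.2 else 0)^2 = 2 * En K u := by
    rw [Fintype.sum_prod_type]
    unfold En
    have e6 : ∀ x y : Wd n, (if Adj K x y then u x - u y else 0)^2
        = if Adj K x y then (u x - u y)^2 else 0 := by
      intro x y; split_ifs <;> simp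
    rw [Finset.sum_congr rfl fun x _ => Finset.sum_congr rfl fun y _ => e6 x y]
    ring
  rw [eF, eG] at cs
  norm_num at cs
  exact cs


theorem statement4 (K : Set ℂ) (hK : IsSG K) (n : ℕ) (hn : 1 ≤ n)
    (w : Fin n → Fin 3) (i : Fin 3) (hw : w ≠ fun _ => i) :
    Rn K w (fun _ => i) ≤ (5/2) * (5/3)^n := by
  obtain ⟨m, rfl⟩ : ∃ m, n = m + 1 := ⟨n - 1, by omega⟩
  set θ := Hn m w i with hθdef
  have hf : IsFlow K θ := isFlow_Hn hK m w i
  have hdv : ∀ x, dv θ x = Dir w (fun _ => i) x := dv_Hn m w i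
  have hE : Eng θ ≤ (3/2) * ((5:ℝ)/3)^(m+1) - 3/2 := Eng_Hn m w i
  -- the test function giving positivity of the energy
  set u0 : Wd (m+1) → ℝ := fun x => if x = w then 1 else 0 with hu0
  have hu0a : u0 w = 1 := by simp [hu0]
  have hu0b : u0 (fun _ => i) = 0 := by
    simp only [hu0]
    rw [if_neg (Ne.symm hw)]
  have hkey0 := flow_bound θ hf w (fun _ => i) hdv u0 hu0a hu0b
  have hEng0 : 0 ≤ Eng θ := Eng_nonneg θ
  have hEn0 : 0 ≤ En K u0 := En_nonneg u0
  have hpos : 0 < Eng θ := by nlinarith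
  -- lower bound for all admissible energies
  have hne : {e : ℝ | ∃ u : (Fin (m+1) → Fin 3) → ℝ,
      u w = 1 ∧ u (fun _ => i) = 0 ∧ e = En K u}.Nonempty :=
    ⟨En K u0, u0, hu0a, hu0b, rfl⟩
  have hlb : ∀ e ∈ {e : ℝ | ∃ u : (Fin (m+1) → Fin 3) → ℝ,
      u w = 1 ∧ u (fun _ => i) = 0 ∧ e = En K u}, (Eng θ)⁻¹ ≤ e := by
    rintro e ⟨u, hua, hub, rfl⟩
    have h4 := flow_bound θ hf w (fun _ => i) hdv u hua hub
    rw [inv_eq_one_div, div_le_iff₀ hpos]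
    nlinarith
  have hsInf := le_csInf hne hlb
  have hR : Rn K w (fun _ => i) ≤ Eng θ := by
    unfold Rn
    rw [← inv_inv (Eng θ)]
    exact inv_anti₀ (inv_pos.2 hpos) hsInf
  have hfin : (3/2) * ((5:ℝ)/3)^(m+1) - 3/2 ≤ (5/2) * (5/3)^(m+1) := by
    have := pow_nonneg (by norm_num : (0:ℝ) ≤ 5/3) (m+1)
    linarith
  linarith


end SG
end
end

section
/- For all x0, x1, x2 ∈ ℝ there exists a unique harmonic-type function U : K → ℝ with boundary values (x0,x1,x2). -/
open MeasureTheory Filter Set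
open scoped ENNReal NNReal Classical Topology

noncomputable section

namespace SG

/-- The remaining index of `{0,1,2}` besides `i` and `j` (when `i ≠ j`):
since `0+1+2 = 0` in `Fin 3`, it is `-(i+j)`. -/
def other (i j : Fin 3) : Fin 3 := -(i + j)

/-- `U : K → ℝ` is harmonic-type with boundary values `(x0, x1, x2)`:
continuous on `K`, `U(pᵢ) = xᵢ`, and for every finite word `w` and distinct `i, j`
(with `k` the remaining index),
`U(f_w((pᵢ+pⱼ)/2)) = (2 U(f_w(pᵢ)) + 2 U(f_w(pⱼ)) + U(f_w(p_k)))/5`. -/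
def IsHarm (K : Set ℂ) (x0 x1 x2 : ℝ) (U : ℂ → ℝ) : Prop :=
  ContinuousOn U K ∧ U (p 0) = x0 ∧ U (p 1) = x1 ∧ U (p 2) = x2 ∧
  ∀ (w : List (Fin 3)) (i j : Fin 3), i ≠ j →
    U (fwl w ((p i + p j) / 2)) =
      (2 * U (fwl w (p i)) + 2 * U (fwl w (p j)) + U (fwl w (p (other i j)))) / 5

/-! ### Basic facts about `p` and `f` -/

lemma p0 : p 0 = 0 := rfl
lemma p1 : p 1 = 1 := rfl

lemma p0re : (p 0).re = 0 := by simp [p]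
lemma p0im : (p 0).im = 0 := by simp [p]
lemma p1re : (p 1).re = 1 := by simp [p]
lemma p1im : (p 1).im = 0 := by simp [p]
lemma p2re : (p 2).re = 1/2 := by simp [p]
lemma p2im : (p 2).im = Real.sqrt 3 / 2 := by simp [p]

lemma dist_f (i : Fin 3) (a b : ℂ) : dist (f i a) (f i b) = dist a b / 2 := by
  simp only [f, Complex.dist_eq]
  have : (a + p i) / 2 - (b + p i) / 2 = (a - b) / 2 := by ring
  rw [this, norm_div]
  norm_num

lemma f_inv (i : Fin 3) (z : ℂ) : 2 * f i z - p i = z := by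
  simp only [f]; ring

lemma f_of_eq {i : Fin 3} {z y : ℂ} (h : z = f i y) : y = 2 * z - p i := by
  rw [h, f_inv]

/-! ### The triangle `T` -/

def T : Set ℂ :=
  {z | 0 ≤ z.im ∧ z.im ≤ Real.sqrt 3 * z.re ∧ z.im ≤ Real.sqrt 3 * (1 - z.re)}

lemma s3_pos : (0:ℝ) < Real.sqrt 3 := Real.sqrt_pos.mpr (by norm_num)

lemma isClosed_T : IsClosed T := by
  have h1 : IsClosed {z : ℂ | 0 ≤ z.im} := isClosed_le continuous_const Complex.continuous_im
  have h2 : IsClosed {z : ℂ | z.im ≤ Real.sqrt 3 * z.re} :=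
    isClosed_le Complex.continuous_im (continuous_const.mul Complex.continuous_re)
  have h3 : IsClosed {z : ℂ | z.im ≤ Real.sqrt 3 * (1 - z.re)} :=
    isClosed_le Complex.continuous_im (continuous_const.mul (continuous_const.sub Complex.continuous_re))
  exact (h1.inter (h2.inter h3) : _)

lemma T_nonempty : T.Nonempty := ⟨0, by simp [T, s3_pos.le]⟩

lemma fT {i : Fin 3} {y : ℂ} (hy : y ∈ T) : f i y ∈ T := by
  obtain ⟨h1, h2, h3⟩ := hy
  have hs := s3_pos
  have hre : (f i y).re = (y.re + (p i).re) / 2 := by simp [f]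
  have him : (f i y).im = (y.im + (p i).im) / 2 := by simp [f]
  have hcases : ∀ k : Fin 3, k = 0 ∨ k = 1 ∨ k = 2 := by decide
  rcases hcases i with rfl | rfl | rfl <;>
    simp only [hre, him, p0re, p0im, p1re, p1im, p2re, p2im, T, Set.mem_setOf_eq] <;>
    refine ⟨by linarith, by nlinarith, by nlinarith⟩

lemma mem_T_bounds {z : ℂ} (hz : z ∈ T) :
    0 ≤ z.re ∧ z.re ≤ 1 ∧ 0 ≤ z.im ∧ z.im ≤ Real.sqrt 3 / 2 := by
  obtain ⟨h1, h2, h3⟩ := hz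
  have hs := s3_pos
  refine ⟨by nlinarith, by nlinarith, h1, by nlinarith⟩



lemma memT_iff (z : ℂ) : z ∈ T ↔
    0 ≤ z.im ∧ z.im ≤ Real.sqrt 3 * z.re ∧ z.im ≤ Real.sqrt 3 * (1 - z.re) := Iff.rfl

lemma overlap01 {z : ℂ} (hi : 2 * z - p 0 ∈ T) (hj : 2 * z - p 1 ∈ T) :
    z = (p 0 + p 1) / 2 := by
  have hs := s3_pos
  rw [memT_iff] at hi hj
  simp only [Complex.sub_im, Complex.sub_re, Complex.mul_im, Complex.mul_re,
    Complex.re_ofNat, Complex.im_ofNat, p0re, p0im, p1re, p1im] at hi hj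
  obtain ⟨hA1, hA2, hA3⟩ := hi
  obtain ⟨hB1, hB2, hB3⟩ := hj
  have him : z.im = 0 := by nlinarith
  have hre : z.re = 1/2 := by nlinarith
  apply Complex.ext <;>
    simp [Complex.div_re, Complex.div_im, Complex.add_re, Complex.add_im,
      p0re, p0im, p1re, p1im, Complex.normSq, him, hre] <;> try ring

lemma overlap02 {z : ℂ} (hi : 2 * z - p 0 ∈ T) (hj : 2 * z - p 2 ∈ T) :
    z = (p 0 + p 2) / 2 := by
  have hs := s3_pos
  rw [memT_iff] at hi hj
  simp only [Complex.sub_im, Complex.sub_re, Complex.mul_im, Complex.mul_re,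
    Complex.re_ofNat, Complex.im_ofNat, p0re, p0im, p2re, p2im] at hi hj
  obtain ⟨hA1, hA2, hA3⟩ := hi
  obtain ⟨hB1, hB2, hB3⟩ := hj
  have hre : z.re = 1/4 := by nlinarith
  have him : z.im = Real.sqrt 3 / 4 := by nlinarith
  apply Complex.ext <;>
    simp [Complex.div_re, Complex.div_im, Complex.add_re, Complex.add_im,
      p0re, p0im, p2re, p2im, Complex.normSq, him, hre] <;> try ring

lemma overlap12 {z : ℂ} (hi : 2 * z - p 1 ∈ T) (hj : 2 * z - p 2 ∈ T) :
    z = (p 1 + p 2) / 2 := by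
  have hs := s3_pos
  rw [memT_iff] at hi hj
  simp only [Complex.sub_im, Complex.sub_re, Complex.mul_im, Complex.mul_re,
    Complex.re_ofNat, Complex.im_ofNat, p1re, p1im, p2re, p2im] at hi hj
  obtain ⟨hA1, hA2, hA3⟩ := hi
  obtain ⟨hB1, hB2, hB3⟩ := hj
  have hre : z.re = 3/4 := by nlinarith
  have him : z.im = Real.sqrt 3 / 4 := by nlinarith
  apply Complex.ext <;>
    simp [Complex.div_re, Complex.div_im, Complex.add_re, Complex.add_im,
      p1re, p1im, p2re, p2im, Complex.normSq, him, hre] <;> try ring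

/-- Two distinct level-1 triangles meet only at the midpoint. -/
lemma overlap {i j : Fin 3} (hij : i ≠ j) {z : ℂ}
    (hi : 2 * z - p i ∈ T) (hj : 2 * z - p j ∈ T) : z = (p i + p j) / 2 := by
  have hcases : ∀ k : Fin 3, k = 0 ∨ k = 1 ∨ k = 2 := by decide
  have hcomm : ∀ a b : ℂ, (a + b)/2 = (b + a)/2 := fun a b => by ring
  rcases hcases i with rfl | rfl | rfl <;> rcases hcases j with rfl | rfl | rfl <;>
    first
      | exact absurd rfl hij
      | exact overlap01 hi hj
      | exact overlap02 hi hj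
      | exact overlap12 hi hj
      | exact (overlap01 hj hi).trans (hcomm _ _)
      | exact (overlap02 hj hi).trans (hcomm _ _)
      | exact (overlap12 hj hi).trans (hcomm _ _)

/-- A corner `p j` lies only in its own level-1 triangle. -/
lemma corner {i j : Fin 3} (h : 2 * p j - p i ∈ T) : i = j := by
  have hs := s3_pos
  have h3 : Real.sqrt 3 * Real.sqrt 3 = 3 := Real.mul_self_sqrt (by norm_num)
  by_contra hij
  rw [memT_iff] at h
  simp only [Complex.sub_im, Complex.sub_re, Complex.mul_im, Complex.mul_re,
    Complex.re_ofNat, Complex.im_ofNat] at h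
  have hcases : ∀ k : Fin 3, k = 0 ∨ k = 1 ∨ k = 2 := by decide
  rcases hcases i with rfl | rfl | rfl <;> rcases hcases j with rfl | rfl | rfl <;>
    simp only [p0re, p0im, p1re, p1im, p2re, p2im] at h <;>
    obtain ⟨h1, h2, h3'⟩ := h <;>
    first
      | exact hij rfl
      | nlinarith

/-! ### Facts about `K` -/

section Kfacts
variable {K : Set ℂ} (hK : IsSG K)
include hK

lemma cell_subset (i : Fin 3) : f i '' K ⊆ K := by
  intro z hz
  rw [hK.2.2]
  have hcases : ∀ k : Fin 3, k = 0 ∨ k = 1 ∨ k = 2 := by decide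
  rcases hcases i with rfl | rfl | rfl
  · exact Or.inl (Or.inl hz)
  · exact Or.inl (Or.inr hz)
  · exact Or.inr hz

lemma isClosed_K : IsClosed K := hK.2.1.isClosed

lemma p_mem (i : Fin 3) : p i ∈ K := by
  obtain ⟨x, hx⟩ := hK.1
  have hmem : ∀ n : ℕ, (f i)^[n] x ∈ K := by
    intro n
    induction n with
    | zero => exact hx
    | succ n ih => rw [Function.iterate_succ_apply']; exact cell_subset hK i ⟨_, ih, rfl⟩
  have hfix : f i (p i) = p i := by simp only [f]; ring
  have hdist : ∀ n : ℕ, dist ((f i)^[n] x) (p i) = dist x (p i) / 2 ^ n := by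
    intro n
    induction n with
    | zero => simp
    | succ n ih =>
      rw [Function.iterate_succ_apply', ← hfix, dist_f, hfix, ih]
      ring
  have htend : Tendsto (fun n => (f i)^[n] x) atTop (nhds (p i)) := by
    rw [tendsto_iff_dist_tendsto_zero]
    simp only [hdist]
    have : Tendsto (fun n : ℕ => dist x (p i) * (1/2) ^ n) atTop (nhds (dist x (p i) * 0)) :=
      (tendsto_pow_atTop_nhds_zero_of_lt_one (by norm_num) (by norm_num)).const_mul _
    simpa [div_eq_mul_inv, div_pow, one_div] using this
  exact (isClosed_K hK).mem_of_tendsto htend (Eventually.of_forall hmem)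

lemma K_subset_T : K ⊆ T := by
  have hcont : Continuous fun z : ℂ => Metric.infDist z T := Metric.continuous_infDist_pt T
  obtain ⟨x, hxK, hmax⟩ := hK.2.1.exists_isMaxOn hK.1 hcont.continuousOn
  have hx0 : Metric.infDist x T ≤ 0 := by
    have hxcell : x ∈ f 0 '' K ∪ f 1 '' K ∪ f 2 '' K := hK.2.2 ▸ hxK
    have : ∃ i : Fin 3, ∃ y ∈ K, f i y = x := by
      rcases hxcell with (⟨y, hy, hyx⟩ | ⟨y, hy, hyx⟩) | ⟨y, hy, hyx⟩
      exacts [⟨0, y, hy, hyx⟩, ⟨1, y, hy, hyx⟩, ⟨2, y, hy, hyx⟩]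
    obtain ⟨i, y, hyK, rfl⟩ := this
    have key : Metric.infDist (f i y) T ≤ Metric.infDist y T / 2 := by
      apply le_of_forall_pos_le_add
      intro ε hε
      obtain ⟨t, htT, htd⟩ := (Metric.infDist_lt_iff T_nonempty).mp
        (show Metric.infDist y T < Metric.infDist y T + 2 * ε by linarith)
      calc Metric.infDist (f i y) T ≤ dist (f i y) (f i t) :=
            Metric.infDist_le_dist_of_mem (fT htT)
        _ = dist y t / 2 := dist_f i y t
        _ ≤ Metric.infDist y T / 2 + ε := by linarith
    have hy_le : Metric.infDist y T ≤ Metric.infDist (f i y) T := hmax hyK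
    linarith
  have : ∀ z ∈ K, Metric.infDist z T = 0 := fun z hz =>
    le_antisymm (le_trans (hmax hz) hx0) Metric.infDist_nonneg
  intro z hz
  exact (isClosed_T.mem_iff_infDist_zero T_nonempty).mpr (this z hz)

lemma mem_cell_iff {i : Fin 3} {z : ℂ} : z ∈ f i '' K ↔ 2 * z - p i ∈ K ∧ z = f i (2 * z - p i) := by
  constructor
  · rintro ⟨y, hy, rfl⟩
    rw [f_inv]
    exact ⟨hy, rfl⟩
  · rintro ⟨h1, h2⟩
    exact ⟨2 * z - p i, h1, h2.symm⟩

lemma cell_overlap {i j : Fin 3} (hij : i ≠ j) {z : ℂ}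
    (hi : z ∈ f i '' K) (hj : z ∈ f j '' K) :
    z = (p i + p j) / 2 ∧ 2 * z - p i = p j ∧ 2 * z - p j = p i := by
  obtain ⟨y, hy, rfl⟩ := hi
  obtain ⟨y', hy', hy'e⟩ := hj
  have h1 : 2 * f i y - p i ∈ T := by rw [f_inv]; exact K_subset_T hK hy
  have h2 : 2 * f i y - p j ∈ T := by
    rw [← hy'e, f_inv]; exact K_subset_T hK hy'
  have hz := overlap hij h1 h2
  refine ⟨hz, ?_, ?_⟩ <;> rw [hz] <;> ring

lemma corner_cell {i j : Fin 3} (h : p j ∈ f i '' K) : i = j := by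
  obtain ⟨y, hy, hye⟩ := h
  apply corner
  have : 2 * p j - p i = y := by rw [← hye, f_inv]
  rw [this]
  exact K_subset_T hK hy

lemma cell_closed (i : Fin 3) : IsClosed (f i '' K) := by
  have : Continuous (f i) := by
    unfold f
    exact (continuous_id.add continuous_const).div_const 2
  exact (hK.2.1.image this).isClosed

lemma K_eq_union : K = f 0 '' K ∪ f 1 '' K ∪ f 2 '' K := hK.2.2

end Kfacts

/-! ### Harmonic extension matrices and the affine seed -/

def Tmat (i : Fin 3) (v : Fin 3 → ℝ) : Fin 3 → ℝ :=
  fun j => if j = i then v i else (2 * v i + 2 * v j + v (other i j)) / 5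

def osc (v : Fin 3 → ℝ) : ℝ := |v 0 - v 1| + |v 1 - v 2| + |v 0 - v 2|

def aff (v : Fin 3 → ℝ) (z : ℂ) : ℝ :=
  v 0 + (v 1 - v 0) * z.re + (2 * v 2 - v 0 - v 1) / Real.sqrt 3 * z.im

lemma Tmat_diag (i : Fin 3) (v : Fin 3 → ℝ) : Tmat i v i = v i := if_pos rfl

lemma Tmat_ne {i j : Fin 3} (h : j ≠ i) (v : Fin 3 → ℝ) :
    Tmat i v j = (2 * v i + 2 * v j + v (other i j)) / 5 := if_neg h

lemma other_comm (i j : Fin 3) : other i j = other j i := by rw [other, other, add_comm]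

lemma Tmat_consist {i j : Fin 3} (h : i ≠ j) (v : Fin 3 → ℝ) :
    Tmat i v j = Tmat j v i := by
  rw [Tmat_ne (Ne.symm h), Tmat_ne h, other_comm]
  ring

lemma osc_nonneg (v : Fin 3 → ℝ) : 0 ≤ osc v := by
  have := abs_nonneg (v 0 - v 1); have := abs_nonneg (v 1 - v 2); have := abs_nonneg (v 0 - v 2)
  unfold osc; linarith

lemma aff_p (v : Fin 3 → ℝ) (i : Fin 3) : aff v (p i) = v i := by
  have hs := s3_pos
  have hcases : ∀ k : Fin 3, k = 0 ∨ k = 1 ∨ k = 2 := by decide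
  rcases hcases i with rfl | rfl | rfl <;>
    simp only [aff, p0re, p0im, p1re, p1im, p2re, p2im] <;>
    field_simp <;> ring

-- evaluation lemmas
lemma oth01 : other 0 1 = 2 := by decide
lemma oth02 : other 0 2 = 1 := by decide
lemma oth12 : other 1 2 = 0 := by decide
lemma oth10 : other 1 0 = 2 := by decide
lemma oth20 : other 2 0 = 1 := by decide
lemma oth21 : other 2 1 = 0 := by decide

lemma osc_Tmat (i : Fin 3) (v : Fin 3 → ℝ) : osc (Tmat i v) ≤ 3/5 * osc v := by
  have h01 := le_abs_self (v 0 - v 1); have h01' := neg_abs_le (v 0 - v 1)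
  have h12 := le_abs_self (v 1 - v 2); have h12' := neg_abs_le (v 1 - v 2)
  have h02 := le_abs_self (v 0 - v 2); have h02' := neg_abs_le (v 0 - v 2)
  have hcases : ∀ k : Fin 3, k = 0 ∨ k = 1 ∨ k = 2 := by decide
  unfold osc
  rcases hcases i with rfl | rfl | rfl
  · rw [Tmat_diag, Tmat_ne (by decide) v, Tmat_ne (by decide) v, oth01, oth02]
    have b1 : |v 0 - (2*v 0 + 2*v 1 + v 2)/5| ≤ (2*|v 0 - v 1| + |v 0 - v 2|)/5 :=
      abs_le.mpr ⟨by linarith, by linarith⟩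
    have b2 : |(2*v 0 + 2*v 1 + v 2)/5 - (2*v 0 + 2*v 2 + v 1)/5| ≤ |v 1 - v 2|/5 :=
      abs_le.mpr ⟨by linarith, by linarith⟩
    have b3 : |v 0 - (2*v 0 + 2*v 2 + v 1)/5| ≤ (2*|v 0 - v 2| + |v 0 - v 1|)/5 :=
      abs_le.mpr ⟨by linarith, by linarith⟩
    linarith
  · rw [Tmat_diag, Tmat_ne (by decide) v, Tmat_ne (by decide) v, oth10, oth12]
    have b1 : |(2*v 1 + 2*v 0 + v 2)/5 - v 1| ≤ (2*|v 0 - v 1| + |v 1 - v 2|)/5 :=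
      abs_le.mpr ⟨by linarith, by linarith⟩
    have b2 : |v 1 - (2*v 1 + 2*v 2 + v 0)/5| ≤ (2*|v 1 - v 2| + |v 0 - v 1|)/5 :=
      abs_le.mpr ⟨by linarith, by linarith⟩
    have b3 : |(2*v 1 + 2*v 0 + v 2)/5 - (2*v 1 + 2*v 2 + v 0)/5| ≤ |v 0 - v 2|/5 :=
      abs_le.mpr ⟨by linarith, by linarith⟩
    linarith
  · rw [Tmat_diag, Tmat_ne (by decide) v, Tmat_ne (by decide) v, oth20, oth21]
    have b1 : |(2*v 2 + 2*v 0 + v 1)/5 - (2*v 2 + 2*v 1 + v 0)/5| ≤ |v 0 - v 1|/5 :=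
      abs_le.mpr ⟨by linarith, by linarith⟩
    have b2 : |(2*v 2 + 2*v 1 + v 0)/5 - v 2| ≤ (2*|v 1 - v 2| + |v 0 - v 2|)/5 :=
      abs_le.mpr ⟨by linarith, by linarith⟩
    have b3 : |(2*v 2 + 2*v 0 + v 1)/5 - v 2| ≤ (2*|v 0 - v 2| + |v 1 - v 2|)/5 :=
      abs_le.mpr ⟨by linarith, by linarith⟩
    linarith

lemma aff_diff_bound {a0 a1 c r s B : ℝ} (hr0 : 0 ≤ r) (hr1 : r ≤ 1)
    (hs0 : 0 ≤ s) (hs1 : s ≤ Real.sqrt 3 / 2)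
    (hB : |a0| + |a1| + |c| / 2 ≤ B) :
    |a0 + a1 * r + c / Real.sqrt 3 * s| ≤ B := by
  have hs3 := s3_pos
  have key : |a0 + a1 * r + c / Real.sqrt 3 * s| ≤ |a0| + |a1| * r + (|c| / Real.sqrt 3) * s := by
    calc |a0 + a1 * r + c / Real.sqrt 3 * s| ≤ |a0 + a1 * r| + |c / Real.sqrt 3 * s| := abs_add_le _ _
      _ ≤ |a0| + |a1 * r| + |c / Real.sqrt 3 * s| := by linarith [abs_add_le a0 (a1 * r)]
      _ = |a0| + |a1| * r + (|c| / Real.sqrt 3) * s := by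
          rw [abs_mul, abs_mul, abs_div, abs_of_nonneg hr0, abs_of_nonneg hs0,
            abs_of_pos hs3]
  have h1 : |a1| * r ≤ |a1| := by
    nlinarith [abs_nonneg a1]
  have h2 : (|c| / Real.sqrt 3) * s ≤ |c| / 2 := by
    have : (|c| / Real.sqrt 3) * s ≤ (|c| / Real.sqrt 3) * (Real.sqrt 3 / 2) := by
      have := abs_nonneg c
      apply mul_le_mul_of_nonneg_left hs1
      positivity
    have heq : (|c| / Real.sqrt 3) * (Real.sqrt 3 / 2) = |c| / 2 := by
      field_simp
    linarith [heq ▸ this]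
  linarith

lemma f_re (i : Fin 3) (y : ℂ) : (f i y).re = (y.re + (p i).re) / 2 := by simp [f]
lemma f_im (i : Fin 3) (y : ℂ) : (f i y).im = (y.im + (p i).im) / 2 := by simp [f]

/-- The basic one-step estimate. -/
lemma aff_step {v : Fin 3 → ℝ} {i : Fin 3} {y : ℂ} (hy : y ∈ T) :
    |aff (Tmat i v) y - aff v (f i y)| ≤ osc v := by
  obtain ⟨hr0, hr1, hs0, hs1⟩ := mem_T_bounds hy
  have hs3 := s3_pos
  have hs3' : Real.sqrt 3 ≠ 0 := ne_of_gt hs3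
  have hcases : ∀ k : Fin 3, k = 0 ∨ k = 1 ∨ k = 2 := by decide
  have habs1 := abs_add_le (v 2 - v 0) (v 2 - v 1)
  have habs2 := abs_add_le (4*(v 0 - v 2)) (v 0 - v 1)
  have habs3 := abs_add_le (4*(v 1 - v 2)) (v 1 - v 0)
  have habs4 := abs_add_le (v 1 - v 0) (v 1 - v 2)
  rw [show |4*(v 0 - v 2)| = 4 * |v 0 - v 2| by rw [abs_mul]; norm_num] at habs2
  rw [show |4*(v 1 - v 2)| = 4 * |v 1 - v 2| by rw [abs_mul]; norm_num] at habs3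
  have hsym01 : |v 1 - v 0| = |v 0 - v 1| := abs_sub_comm _ _
  have hn01 := abs_nonneg (v 0 - v 1); have hn12 := abs_nonneg (v 1 - v 2)
  have hn02 := abs_nonneg (v 0 - v 2)
  have hsym12 : |v 2 - v 1| = |v 1 - v 2| := abs_sub_comm _ _
  have hsym02 : |v 2 - v 0| = |v 0 - v 2| := abs_sub_comm _ _
  rcases hcases i with rfl | rfl | rfl
  · have hD : aff (Tmat 0 v) y - aff v (f 0 y) =
        0 + (2*v 2 - v 1 - v 0)/10 * y.re + (5*v 1 - v 0 - 4*v 2)/10 / Real.sqrt 3 * y.im := by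
      rw [aff, aff, Tmat_diag, Tmat_ne (by decide) v, Tmat_ne (by decide) v, oth01, oth02,
        f_re, f_im, p0re, p0im]
      field_simp
      ring
    rw [hD]
    apply aff_diff_bound hr0 hr1 hs0 hs1
    have e1 : |(2*v 2 - v 1 - v 0)/10| ≤ (|v 2 - v 0| + |v 2 - v 1|)/10 := by
      rw [abs_div, show |(10:ℝ)| = 10 by norm_num]
      apply div_le_div_of_nonneg_right ?_ (by norm_num)
      calc |2*v 2 - v 1 - v 0| = |(v 2 - v 0) + (v 2 - v 1)| := by ring_nf
        _ ≤ _ := habs1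
    have e2 : |(5*v 1 - v 0 - 4*v 2)/10| ≤ (4*|v 1 - v 2| + |v 1 - v 0|)/10 := by
      rw [abs_div, show |(10:ℝ)| = 10 by norm_num]
      apply div_le_div_of_nonneg_right ?_ (by norm_num)
      calc |5*v 1 - v 0 - 4*v 2| = |4*(v 1 - v 2) + (v 1 - v 0)| := by ring_nf
        _ ≤ _ := habs3
    simp only [abs_zero]
    unfold osc
    linarith
  · have hD : aff (Tmat 1 v) y - aff v (f 1 y) =
        (2*v 2 - v 0 - v 1)/10 + (-(2*v 2 - v 0 - v 1)/10) * y.re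
          + (5*v 0 - v 1 - 4*v 2)/10 / Real.sqrt 3 * y.im := by
      rw [aff, aff, Tmat_diag, Tmat_ne (by decide) v, Tmat_ne (by decide) v, oth10, oth12,
        f_re, f_im, p1re, p1im]
      field_simp
      ring
    rw [hD]
    apply aff_diff_bound hr0 hr1 hs0 hs1
    have e1 : |(2*v 2 - v 0 - v 1)/10| ≤ (|v 2 - v 0| + |v 2 - v 1|)/10 := by
      rw [abs_div, show |(10:ℝ)| = 10 by norm_num]
      apply div_le_div_of_nonneg_right ?_ (by norm_num)
      calc |2*v 2 - v 0 - v 1| = |(v 2 - v 0) + (v 2 - v 1)| := by ring_nf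
        _ ≤ _ := habs1
    have e2 : |(5*v 0 - v 1 - 4*v 2)/10| ≤ (4*|v 0 - v 2| + |v 0 - v 1|)/10 := by
      rw [abs_div, show |(10:ℝ)| = 10 by norm_num]
      apply div_le_div_of_nonneg_right ?_ (by norm_num)
      calc |5*v 0 - v 1 - 4*v 2| = |4*(v 0 - v 2) + (v 0 - v 1)| := by ring_nf
        _ ≤ _ := habs2
    rw [show |(-(2*v 2 - v 0 - v 1)/10)| = |(2*v 2 - v 0 - v 1)/10| by
      rw [neg_div, abs_neg]]
    unfold osc
    linarith
  · have hD : aff (Tmat 2 v) y - aff v (f 2 y) =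
        (2*v 1 - v 0 - v 2)/10 + (-(3*(v 1 - v 0))/10) * y.re
          + (2*v 2 - v 0 - v 1)/10 / Real.sqrt 3 * y.im := by
      rw [aff, aff, Tmat_diag, Tmat_ne (by decide) v, Tmat_ne (by decide) v, oth20, oth21,
        f_re, f_im, p2re, p2im]
      field_simp
      ring
    rw [hD]
    apply aff_diff_bound hr0 hr1 hs0 hs1
    have e1 : |(2*v 1 - v 0 - v 2)/10| ≤ (|v 1 - v 0| + |v 1 - v 2|)/10 := by
      rw [abs_div, show |(10:ℝ)| = 10 by norm_num]
      apply div_le_div_of_nonneg_right ?_ (by norm_num)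
      calc |2*v 1 - v 0 - v 2| = |(v 1 - v 0) + (v 1 - v 2)| := by ring_nf
        _ ≤ _ := habs4
    have e2 : |(-(3*(v 1 - v 0))/10)| = 3 * |v 1 - v 0| / 10 := by
      rw [neg_div, abs_neg, abs_div, abs_mul, show |(10:ℝ)| = 10 by norm_num,
        show |(3:ℝ)| = 3 by norm_num]
    have e3 : |(2*v 2 - v 0 - v 1)/10| ≤ (|v 2 - v 0| + |v 2 - v 1|)/10 := by
      rw [abs_div, show |(10:ℝ)| = 10 by norm_num]
      apply div_le_div_of_nonneg_right ?_ (by norm_num)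
      calc |2*v 2 - v 0 - v 1| = |(v 2 - v 0) + (v 2 - v 1)| := by ring_nf
        _ ≤ _ := habs1
    rw [e2]
    unfold osc
    linarith

/-! ### The approximating sequence -/

def useq (K : Set ℂ) : ℕ → (Fin 3 → ℝ) → ℂ → ℝ
  | 0, v, z => aff v z
  | (n+1), v, z =>
    if z ∈ f 0 '' K then useq K n (Tmat 0 v) (2*z - p 0)
    else if z ∈ f 1 '' K then useq K n (Tmat 1 v) (2*z - p 1)
    else if z ∈ f 2 '' K then useq K n (Tmat 2 v) (2*z - p 2)
    else aff v z

lemma useq_zero (K : Set ℂ) (v : Fin 3 → ℝ) (z : ℂ) : useq K 0 v z = aff v z := rfl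

lemma useq_succ (K : Set ℂ) (n : ℕ) (v : Fin 3 → ℝ) (z : ℂ) :
    useq K (n+1) v z =
      if z ∈ f 0 '' K then useq K n (Tmat 0 v) (2*z - p 0)
      else if z ∈ f 1 '' K then useq K n (Tmat 1 v) (2*z - p 1)
      else if z ∈ f 2 '' K then useq K n (Tmat 2 v) (2*z - p 2)
      else aff v z := rfl

section main
variable {K : Set ℂ} (hK : IsSG K)
include hK

lemma p_mem_cell (i : Fin 3) : p i ∈ f i '' K := by
  refine ⟨p i, p_mem hK i, ?_⟩
  rw [f]; ring

lemma useq_p (n : ℕ) (v : Fin 3 → ℝ) (i : Fin 3) : useq K n v (p i) = v i := by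
  induction n generalizing v with
  | zero => exact aff_p v i
  | succ n ih =>
    have hcases : ∀ k : Fin 3, k = 0 ∨ k = 1 ∨ k = 2 := by decide
    have h2p : ∀ j : Fin 3, 2 * p j - p j = p j := fun j => by ring
    rcases hcases i with rfl | rfl | rfl
    · rw [useq_succ, if_pos (p_mem_cell hK 0), h2p, ih, Tmat_diag]
    · rw [useq_succ, if_neg (fun h => by exact absurd (corner_cell hK h) (by decide)),
        if_pos (p_mem_cell hK 1), h2p, ih, Tmat_diag]
    · rw [useq_succ, if_neg (fun h => by exact absurd (corner_cell hK h) (by decide)),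
        if_neg (fun h => by exact absurd (corner_cell hK h) (by decide)),
        if_pos (p_mem_cell hK 2), h2p, ih, Tmat_diag]

lemma useq_cell {i : Fin 3} {z : ℂ} (hz : z ∈ f i '' K) (n : ℕ) (v : Fin 3 → ℝ) :
    useq K (n+1) v z = useq K n (Tmat i v) (2*z - p i) := by
  have hcases : ∀ k : Fin 3, k = 0 ∨ k = 1 ∨ k = 2 := by decide
  rcases hcases i with rfl | rfl | rfl
  · rw [useq_succ, if_pos hz]
  · by_cases h0 : z ∈ f 0 '' K
    · obtain ⟨hmid, he0, he1⟩ := cell_overlap hK (show (0:Fin 3) ≠ 1 by decide) h0 hz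
      rw [useq_succ, if_pos h0, he0, he1, useq_p hK, useq_p hK,
        Tmat_consist (show (0:Fin 3) ≠ 1 by decide)]
    · rw [useq_succ, if_neg h0, if_pos hz]
  · by_cases h0 : z ∈ f 0 '' K
    · obtain ⟨hmid, he0, he2⟩ := cell_overlap hK (show (0:Fin 3) ≠ 2 by decide) h0 hz
      rw [useq_succ, if_pos h0, he0, he2, useq_p hK, useq_p hK,
        Tmat_consist (show (0:Fin 3) ≠ 2 by decide)]
    · by_cases h1 : z ∈ f 1 '' K
      · obtain ⟨hmid, he1, he2⟩ := cell_overlap hK (show (1:Fin 3) ≠ 2 by decide) h1 hz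
        rw [useq_succ, if_neg h0, if_pos h1, he1, he2, useq_p hK, useq_p hK,
          Tmat_consist (show (1:Fin 3) ≠ 2 by decide)]
      · rw [useq_succ, if_neg h0, if_neg h1, if_pos hz]

lemma exists_cell {z : ℂ} (hz : z ∈ K) :
    ∃ i : Fin 3, z ∈ f i '' K ∧ 2*z - p i ∈ K := by
  have hzu : z ∈ f 0 '' K ∪ f 1 '' K ∪ f 2 '' K := (K_eq_union hK) ▸ hz
  have key : ∀ i : Fin 3, z ∈ f i '' K → ∃ i : Fin 3, z ∈ f i '' K ∧ 2*z - p i ∈ K := by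
    intro i hi
    obtain ⟨y, hy, hyz⟩ := hi
    exact ⟨i, ⟨y, hy, hyz⟩, by rw [← hyz, f_inv]; exact hy⟩
  rcases hzu with (h | h) | h
  exacts [key 0 h, key 1 h, key 2 h]

lemma useq_diff (n : ℕ) (v : Fin 3 → ℝ) {z : ℂ} (hz : z ∈ K) :
    |useq K (n+1) v z - useq K n v z| ≤ (3/5)^n * osc v := by
  induction n generalizing v z with
  | zero =>
    obtain ⟨i, hi, hyK⟩ := exists_cell hK hz
    rw [useq_cell hK hi, useq_zero]
    have hzf : z = f i (2*z - p i) := by rw [f]; ring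
    have hyT : 2*z - p i ∈ T := K_subset_T hK hyK
    calc |aff (Tmat i v) (2*z - p i) - aff v z|
        = |aff (Tmat i v) (2*z - p i) - aff v (f i (2*z - p i))| := by rw [← hzf]
      _ ≤ osc v := aff_step hyT
      _ = (3/5)^0 * osc v := by norm_num
  | succ n ih =>
    obtain ⟨i, hi, hyK⟩ := exists_cell hK hz
    rw [useq_cell hK hi, useq_cell hK hi]
    calc |useq K (n+1) (Tmat i v) (2*z - p i) - useq K n (Tmat i v) (2*z - p i)|
        ≤ (3/5)^n * osc (Tmat i v) := ih _ hyK
      _ ≤ (3/5)^n * (3/5 * osc v) := by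
          apply mul_le_mul_of_nonneg_left (osc_Tmat i v) (by positivity)
      _ = (3/5)^(n+1) * osc v := by ring

omit hK in
lemma continuousOn_union_closed {F : ℂ → ℝ} {s t : Set ℂ} (hs : IsClosed s) (ht : IsClosed t)
    (hfs : ContinuousOn F s) (hft : ContinuousOn F t) : ContinuousOn F (s ∪ t) := by
  intro x hx
  have triv : ∀ u : Set ℂ, IsClosed u → x ∉ u → ContinuousWithinAt F u x := by
    intro u hu hxu
    have : 𝓝[u] x = ⊥ := by
      rw [← not_neBot, ← mem_closure_iff_nhdsWithin_neBot, hu.closure_eq]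
      exact hxu
    unfold ContinuousWithinAt
    rw [this]
    exact tendsto_bot
  apply ContinuousWithinAt.union
  · by_cases hxs : x ∈ s
    · exact hfs x hxs
    · exact triv s hs hxs
  · by_cases hxt : x ∈ t
    · exact hft x hxt
    · exact triv t ht hxt

omit hK in
lemma aff_continuous (v : Fin 3 → ℝ) : Continuous (aff v) := by
  unfold aff
  exact (continuous_const.add (continuous_const.mul Complex.continuous_re)).add
    (continuous_const.mul Complex.continuous_im)

lemma useq_cont (n : ℕ) (v : Fin 3 → ℝ) : ContinuousOn (useq K n v) K := by
  induction n generalizing v with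
  | zero => exact (aff_continuous v).continuousOn
  | succ n ih =>
    have hcell : ∀ i : Fin 3, ContinuousOn (useq K (n+1) v) (f i '' K) := by
      intro i
      apply ContinuousOn.congr (f := fun z => useq K n (Tmat i v) (2*z - p i))
      · apply (ih (Tmat i v)).comp
        · exact ((continuous_const.mul continuous_id).sub continuous_const).continuousOn
        · rintro z ⟨y, hy, rfl⟩
          show 2 * f i y - p i ∈ K
          rw [f_inv]
          exact hy
      · intro z hz
        exact useq_cell hK hz n v
    have hcover : ContinuousOn (useq K (n+1) v) ((f 0 '' K ∪ f 1 '' K) ∪ f 2 '' K) := by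
      apply continuousOn_union_closed ((cell_closed hK 0).union (cell_closed hK 1))
        (cell_closed hK 2) ?_ (hcell 2)
      exact continuousOn_union_closed (cell_closed hK 0) (cell_closed hK 1) (hcell 0) (hcell 1)
    exact hcover.mono (K_eq_union hK).subset

end main

/-! ### The harmonic function as a uniform limit -/

def Ufun (K : Set ℂ) (v : Fin 3 → ℝ) (z : ℂ) : ℝ :=
  aff v z + ∑' n : ℕ, (useq K (n+1) v z - useq K n v z)

section limit
variable {K : Set ℂ} (hK : IsSG K)
include hK

lemma useq_unif (v : Fin 3 → ℝ) :
    TendstoUniformlyOn (fun n z => useq K n v z) (Ufun K v) atTop K := by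
  have hsum : Summable (fun n : ℕ => (3/5:ℝ)^n * osc v) :=
    (summable_geometric_of_lt_one (by norm_num) (by norm_num)).mul_right _
  have hb : ∀ n : ℕ, ∀ z ∈ K, ‖useq K (n+1) v z - useq K n v z‖ ≤ (3/5)^n * osc v := by
    intro n z hz
    rw [Real.norm_eq_abs]
    exact useq_diff hK n v hz
  have h := tendstoUniformlyOn_tsum_nat hsum hb
  have haff : TendstoUniformlyOn (fun _ : ℕ => fun z => aff v z) (fun z => aff v z) atTop K := by
    intro u hu
    filter_upwards with n z _ using refl_mem_uniformity hu
  have h2 := haff.add h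
  have key : ((fun _ : ℕ => fun z => aff v z) + fun N z =>
      ∑ n ∈ Finset.range N, (useq K (n+1) v z - useq K n v z)) = fun n z => useq K n v z := by
    funext n z
    simp only [Pi.add_apply, Finset.sum_range_sub (fun k => useq K k v z), useq_zero]
    ring
  rw [key] at h2
  exact h2

lemma Ufun_cont (v : Fin 3 → ℝ) : ContinuousOn (Ufun K v) K :=
  (useq_unif hK v).continuousOn (Eventually.of_forall fun n => useq_cont hK n v).frequently

lemma Ufun_tendsto (v : Fin 3 → ℝ) {z : ℂ} (hz : z ∈ K) :
    Tendsto (fun n => useq K n v z) atTop (𝓝 (Ufun K v z)) :=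
  (useq_unif hK v).tendsto_at hz

lemma Ufun_p (v : Fin 3 → ℝ) (i : Fin 3) : Ufun K v (p i) = v i := by
  have h1 := Ufun_tendsto hK v (p_mem hK i)
  have h2 : Tendsto (fun n => useq K n v (p i)) atTop (𝓝 (v i)) := by
    simp only [useq_p hK]
    exact tendsto_const_nhds
  exact tendsto_nhds_unique h1 h2

lemma Ufun_cellmap (v : Fin 3 → ℝ) (i : Fin 3) {z : ℂ} (hz : z ∈ K) :
    Ufun K v (f i z) = Ufun K (Tmat i v) z := by
  have hmem : f i z ∈ f i '' K := Set.mem_image_of_mem _ hz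
  have hKz : f i z ∈ K := cell_subset hK i hmem
  have h1 := Ufun_tendsto hK v hKz
  have h1' : Tendsto (fun n => useq K (n+1) v (f i z)) atTop (𝓝 (Ufun K v (f i z))) :=
    (tendsto_add_atTop_iff_nat 1).mpr h1
  have h2 := Ufun_tendsto hK (Tmat i v) hz
  have heq : (fun n => useq K (n+1) v (f i z)) = fun n => useq K n (Tmat i v) z := by
    funext n
    rw [useq_cell hK hmem n v, f_inv]
  rw [heq] at h1'
  exact tendsto_nhds_unique h1' h2

end limit

/-! ### Words and vertex values -/

def TW : List (Fin 3) → (Fin 3 → ℝ) → (Fin 3 → ℝ)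
  | [], v => v
  | a :: t, v => TW t (Tmat a v)

lemma fwl_nil (x : ℂ) : fwl [] x = x := rfl
lemma fwl_cons (a : Fin 3) (t : List (Fin 3)) (x : ℂ) : fwl (a :: t) x = f a (fwl t x) := rfl

lemma TW_append (w : List (Fin 3)) (i : Fin 3) (v : Fin 3 → ℝ) :
    TW (w ++ [i]) v = Tmat i (TW w v) := by
  induction w generalizing v with
  | nil => rfl
  | cons a t ih => exact ih (Tmat a v)

lemma fwl_append (w w' : List (Fin 3)) (x : ℂ) : fwl (w ++ w') x = fwl w (fwl w' x) := by
  induction w with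
  | nil => rfl
  | cons a t ih => rw [List.cons_append, fwl_cons, fwl_cons, ih]

lemma midpoint_eq (i j : Fin 3) : (p i + p j) / 2 = f i (p j) := by rw [f]; ring

lemma fwl_dist (w : List (Fin 3)) (a b : ℂ) :
    dist (fwl w a) (fwl w b) = dist a b / 2 ^ w.length := by
  induction w with
  | nil => simp [fwl_nil]
  | cons c t ih =>
    rw [fwl_cons, fwl_cons, dist_f, ih, List.length_cons]
    ring

section final
variable {K : Set ℂ} (hK : IsSG K)
include hK

lemma fwl_mem (w : List (Fin 3)) {x : ℂ} (hx : x ∈ K) : fwl w x ∈ K := by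
  induction w with
  | nil => exact hx
  | cons a t ih => exact cell_subset hK a (Set.mem_image_of_mem _ ih)

lemma Ufun_fwl (v : Fin 3 → ℝ) (w : List (Fin 3)) {x : ℂ} (hx : x ∈ K) :
    Ufun K v (fwl w x) = Ufun K (TW w v) x := by
  induction w generalizing v with
  | nil => rfl
  | cons a t ih =>
    rw [fwl_cons, Ufun_cellmap hK v a (fwl_mem hK t hx), ih (Tmat a v)]
    rfl

/-- Any harmonic-type function takes the values prescribed by the matrices at vertices. -/
lemma harm_vertex {x0 x1 x2 : ℝ} {W : ℂ → ℝ} (hW : IsHarm K x0 x1 x2 W) :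
    ∀ (w : List (Fin 3)) (a : Fin 3), W (fwl w (p a)) = TW w ![x0, x1, x2] a := by
  obtain ⟨_, h0, h1, h2, hrec⟩ := hW
  intro w
  induction w using List.reverseRecOn with
  | nil =>
    intro a
    have hcases : ∀ k : Fin 3, k = 0 ∨ k = 1 ∨ k = 2 := by decide
    rcases hcases a with rfl | rfl | rfl <;> simp [fwl_nil, TW, h0, h1, h2]
  | append_singleton w i ih =>
    intro a
    rw [fwl_append, TW_append]
    by_cases hai : a = i
    · subst hai
      have : fwl [a] (p a) = p a := by
        rw [show fwl [a] (p a) = f a (p a) from rfl, f]; ring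
      rw [this, Tmat_diag, ih a]
    · have hmid : fwl [i] (p a) = (p i + p a) / 2 := by
        rw [show fwl [i] (p a) = f i (p a) from rfl, f]; ring
      rw [hmid, hrec w i a (Ne.symm hai), Tmat_ne hai, ih i, ih a,
        ih (other i a)]

/-- `Ufun` is harmonic-type. -/
lemma Ufun_isHarm (x0 x1 x2 : ℝ) : IsHarm K x0 x1 x2 (Ufun K ![x0, x1, x2]) := by
  set v : Fin 3 → ℝ := ![x0, x1, x2] with hv
  have hvert : ∀ (w : List (Fin 3)) (a : Fin 3), Ufun K v (fwl w (p a)) = TW w v a := by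
    intro w a
    rw [Ufun_fwl hK v w (p_mem hK a), Ufun_p hK]
  refine ⟨Ufun_cont hK v, ?_, ?_, ?_, ?_⟩
  · rw [Ufun_p hK]; simp [hv]
  · rw [Ufun_p hK]; simp [hv]
  · rw [Ufun_p hK]; simp [hv]
  · intro w i j hij
    have hm : (p i + p j) / 2 = fwl [i] (p j) := by
      rw [show fwl [i] (p j) = f i (p j) from rfl, f]; ring
    rw [hm, ← fwl_append, hvert (w ++ [i]) j, TW_append, Tmat_ne (Ne.symm hij),
      hvert w i, hvert w j, hvert w (other i j)]

lemma vertex_approx {x : ℂ} (hx : x ∈ K) (C : ℝ)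
    (hC : ∀ ⦃a⦄, a ∈ K → ∀ ⦃b⦄, b ∈ K → dist a b ≤ C) (n : ℕ) :
    ∃ w : List (Fin 3), fwl w (p 0) ∈ K ∧ dist x (fwl w (p 0)) ≤ C / 2 ^ n := by
  have hword : ∀ m : ℕ, ∀ z ∈ K, ∃ w : List (Fin 3), w.length = m ∧ ∃ y ∈ K, z = fwl w y := by
    intro m
    induction m with
    | zero => exact fun z hz => ⟨[], rfl, z, hz, rfl⟩
    | succ m ih =>
      intro z hz
      obtain ⟨i, hi, hyK⟩ := exists_cell hK hz
      obtain ⟨w, hwl, y, hyK', hy⟩ := ih _ hyK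
      refine ⟨i :: w, by simp [hwl], y, hyK', ?_⟩
      rw [fwl_cons, ← hy]
      obtain ⟨u, hu, huz⟩ := hi
      rw [← huz, f_inv]
  obtain ⟨w, hwl, y, hyK, rfl⟩ := hword n x hx
  refine ⟨w, fwl_mem hK w (p_mem hK 0), ?_⟩
  rw [fwl_dist, hwl]
  gcongr
  exact hC hyK (p_mem hK 0)

end final


theorem statement5 (K : Set ℂ) (hK : IsSG K) (x0 x1 x2 : ℝ) :
    ∃ U : ℂ → ℝ, IsHarm K x0 x1 x2 U ∧
      ∀ V : ℂ → ℝ, IsHarm K x0 x1 x2 V → Set.EqOn U V K := by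
  refine ⟨Ufun K ![x0, x1, x2], Ufun_isHarm hK x0 x1 x2, ?_⟩
  intro V hV x hx
  set U := Ufun K ![x0, x1, x2] with hU
  have hUharm : IsHarm K x0 x1 x2 U := Ufun_isHarm hK x0 x1 x2
  -- U and V agree on vertices
  have hvert : ∀ (w : List (Fin 3)), U (fwl w (p 0)) = V (fwl w (p 0)) := by
    intro w
    rw [harm_vertex hK hUharm w 0, harm_vertex hK hV w 0]
  obtain ⟨C, hC⟩ := Metric.isBounded_iff.mp hK.2.1.isBounded
  have happrox : ∀ n : ℕ, ∃ qq : ℂ, qq ∈ K ∧ U qq = V qq ∧ dist x qq ≤ C / 2 ^ n := by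
    intro n
    obtain ⟨w, hwK, hwd⟩ := vertex_approx hK hx C hC n
    exact ⟨fwl w (p 0), hwK, hvert w, hwd⟩
  choose q hqK hqUV hqd using happrox
  -- q n → x
  have hq_tendsto : Tendsto q atTop (𝓝 x) := by
    rw [tendsto_iff_dist_tendsto_zero]
    apply squeeze_zero (fun n => dist_nonneg) (fun n => (dist_comm (q n) x) ▸ hqd n)
    have : Tendsto (fun n : ℕ => C * (1/2) ^ n) atTop (𝓝 (C * 0)) :=
      (tendsto_pow_atTop_nhds_zero_of_lt_one (by norm_num) (by norm_num)).const_mul _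
    simpa [div_eq_mul_inv, div_pow, one_div] using this
  have hq_tendsto' : Tendsto q atTop (𝓝[K] x) := by
    rw [tendsto_nhdsWithin_iff]
    exact ⟨hq_tendsto, Eventually.of_forall hqK⟩
  have hUlim : Tendsto (fun n => U (q n)) atTop (𝓝 (U x)) :=
    (hUharm.1 x hx).tendsto.comp hq_tendsto'
  have hVlim : Tendsto (fun n => V (q n)) atTop (𝓝 (V x)) :=
    (hV.1 x hx).tendsto.comp hq_tendsto'
  have : (fun n => U (q n)) = fun n => V (q n) := funext hqUV
  rw [this] at hUlim
  exact tendsto_nhds_unique hUlim hVlim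

end SG
end
end
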